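/- arXiv:2410.07483 — 2 statements merged into one kernel-verified Lean document; each statement's English description precedes it below -/
import Mathlib

section
/- (Mean-zero property of the efficient influence function.) Fix z ∈ {1,...,J} and g ∈ {J−z+1,...,J} with P(G=g) > 0, and set μ_g(z) := E[Y_z·1(G=g)]/P(G=g). Define ψ_{S,w} := 1(Z=w)·(S − p_w(X))/π_w + p_w(X) for w ∈ {1,...,J}, with the convention ψ_{S,0} := 0; define ψ_{YS,z} := 1(Z=z)·(Y·S − m_z(X)·p_z(X))/π_z + m_z(X)·p_z(X); and define ξ_{zg} := ((p_{J−g+1}(X) − p_{J−g}(X))/p_z(X))·(ψ_{YS,z} − m_z(X)·ψ_{S,z}) + (m_z(X) − μ_g(z))·(ψ_{S,J−g+1} − ψ_{S,J−g}). Then, under randomization, monotonicity, principal ignorability and positivity, E[ξ_{zg}] = 0; equivalently, the influence function Ψ_{zg} := ξ_{zg}/(E[p_{J−g+1}(X)] − E[p_{J−g}(X)]) has mean zero. -/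
open MeasureTheory ProbabilityTheory

noncomputable section

namespace TruncationByDeath

variable {Ω : Type*} {𝒳 : Type*} [MeasurableSpace Ω] [MeasurableSpace 𝒳]

/-- The σ-algebra on `Ω` generated by the covariate map `X`. -/
def mX (X : Ω → 𝒳) : MeasurableSpace Ω := MeasurableSpace.comap X inferInstance

/-- Real-valued indicator of the event `{Z = z}`. -/
def indic (Z : Ω → ℕ) (z : ℕ) : Ω → ℝ := fun ω => if Z ω = z then 1 else 0

/-- Observed survival status `S := ∑_z 1(Z=z) ⬝ S_z`. -/
def Sobs (J : ℕ) (Z : Ω → ℕ) (S : ℕ → Ω → ℝ) : Ω → ℝ :=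
  fun ω => ∑ z ∈ Finset.Icc 1 J, indic Z z ω * S z ω

/-- Observed outcome `Y := ∑_z 1(Z=z) ⬝ Y_z`. -/
def Yobs (J : ℕ) (Z : Ω → ℕ) (Y : ℕ → Ω → ℝ) : Ω → ℝ :=
  fun ω => ∑ z ∈ Finset.Icc 1 J, indic Z z ω * Y z ω

/-- Principal score `p_z(X) := E[S_z | σ(X)]`, with conventions `p_0 := 0` and `p_{J+1} := 1`. -/
def pscore (P : Measure Ω) (X : Ω → 𝒳) (S : ℕ → Ω → ℝ) (J : ℕ) (z : ℕ) : Ω → ℝ :=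
  if z = 0 then fun _ => 0 else if z = J + 1 then fun _ => 1 else P[S z | mX X]

/-- Treatment probability `π_z := P(Z = z)`. -/
def piZ (P : Measure Ω) (Z : Ω → ℕ) (z : ℕ) : ℝ := (P {ω | Z ω = z}).toReal

/-- Principal stratum variable `G := ∑_{z=1}^J S_z`. -/
def Gsum (J : ℕ) (S : ℕ → Ω → ℝ) : Ω → ℝ := fun ω => ∑ z ∈ Finset.Icc 1 J, S z ω

/-- Real-valued indicator of the event `{G = g}`. -/
def indG (J : ℕ) (S : ℕ → Ω → ℝ) (g : ℕ) : Ω → ℝ :=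
  Set.indicator {ω | Gsum J S ω = (g : ℝ)} (fun _ => (1 : ℝ))

/-- Principal score of the stratum `g` : `e_g(X) := E[1(G=g) | σ(X)]`. -/
def eg (P : Measure Ω) (X : Ω → 𝒳) (J : ℕ) (S : ℕ → Ω → ℝ) (g : ℕ) : Ω → ℝ :=
  P[indG J S g | mX X]

/-- Basic setup: measurability, ranges, values and integrability of the primitives. -/
structure Setup (P : Measure Ω) (J : ℕ) (X : Ω → 𝒳) (Z : Ω → ℕ)
    (S Y : ℕ → Ω → ℝ) : Prop where
  hJ : 2 ≤ J
  hX : Measurable X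
  hZ : Measurable Z
  hZr : ∀ ω, Z ω ∈ Finset.Icc 1 J
  hSm : ∀ z, Measurable (S z)
  hS01 : ∀ z ω, S z ω = 0 ∨ S z ω = 1
  hYm : ∀ z, Measurable (Y z)
  hYint : ∀ z, Integrable (Y z) P

/-- Randomization : `Z` is independent of `(X, S_1,…,S_J, Y_1,…,Y_J)` and `π_z > 0` for all
`z ∈ {1,…,J}`. -/
def Randomization (P : Measure Ω) (J : ℕ) (X : Ω → 𝒳) (Z : Ω → ℕ)
    (S Y : ℕ → Ω → ℝ) : Prop :=
  IndepFun Z (fun ω => (X ω, fun z => S z ω, fun z => Y z ω)) P ∧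
    ∀ z ∈ Finset.Icc 1 J, 0 < piZ P Z z

/-- Monotonicity : `S_{z'} ≤ S_z` a.s. whenever `z' ≤ z`. -/
def Monotonicity (P : Measure Ω) (J : ℕ) (S : ℕ → Ω → ℝ) : Prop :=
  ∀ z ∈ Finset.Icc 1 J, ∀ z' ∈ Finset.Icc 1 J, z' ≤ z → ∀ᵐ ω ∂P, S z' ω ≤ S z ω

/-- Principal ignorability. -/
def PrincipalIgnorability (P : Measure Ω) (J : ℕ) (X : Ω → 𝒳)
    (S Y : ℕ → Ω → ℝ) : Prop :=
  ∀ z ∈ Finset.Icc 1 J, ∀ g ∈ Finset.Icc (J - z + 1) J, ∀ g' ∈ Finset.Icc (J - z + 1) J,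
    (fun ω => (P[fun ω' => Y z ω' * indG J S g ω' | mX X]) ω * eg P X J S g' ω)
      =ᵐ[P] fun ω => (P[fun ω' => Y z ω' * indG J S g' ω' | mX X]) ω * eg P X J S g ω

/-- Positivity : the principal scores are uniformly bounded away from zero. -/
def Positivity (P : Measure Ω) (J : ℕ) (X : Ω → 𝒳) (S : ℕ → Ω → ℝ) : Prop :=
  ∃ c : ℝ, 0 < c ∧ ∀ z ∈ Finset.Icc 1 J, ∀ᵐ ω ∂P, c ≤ pscore P X S J z ω

/-- Augmented survival term `ψ_{S,w} := 1(Z=w)(S − p_w(X))/π_w + p_w(X)`, with the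
convention `ψ_{S,0} := 0`. -/
def psiS (P : Measure Ω) (X : Ω → 𝒳) (Z : Ω → ℕ) (S : ℕ → Ω → ℝ) (J w : ℕ) : Ω → ℝ :=
  if w = 0 then fun _ => 0
  else fun ω =>
    indic Z w ω * (Sobs J Z S ω - pscore P X S J w ω) / piZ P Z w + pscore P X S J w ω

/-- Threshold characterization of a monotone `{0,1}`-valued sequence on `Icc 1 J`. -/
lemma thresh {J : ℕ} (f : ℕ → ℝ) (h01 : ∀ z, f z = 0 ∨ f z = 1)
    (hmono : ∀ z' z, z' ∈ Finset.Icc 1 J → z ∈ Finset.Icc 1 J → z' ≤ z → f z' ≤ f z) :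
    ∃ n : ℕ, n ≤ J ∧ (∑ z ∈ Finset.Icc 1 J, f z) = (n : ℝ) ∧
      ∀ z ∈ Finset.Icc 1 J, f z = if J - n + 1 ≤ z then 1 else 0 := by
  classical
  set t := (Finset.Icc 1 J).filter (fun z => f z = 1) with ht
  have htcard : t.card ≤ J := by
    calc t.card ≤ (Finset.Icc 1 J).card := Finset.card_filter_le _ _
    _ = J := by rw [Nat.card_Icc]; omega
  refine ⟨t.card, htcard, ?_, ?_⟩
  · rw [← Finset.sum_filter_add_sum_filter_not (Finset.Icc 1 J) (fun z => f z = 1) f]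
    have h1 : ∑ z ∈ t, f z = t.card := by
      rw [Finset.sum_congr rfl (fun z hz => (Finset.mem_filter.mp hz).2)]
      simp [ht]
    have h2 : ∑ z ∈ (Finset.Icc 1 J).filter (fun z => ¬ f z = 1), f z = 0 := by
      apply Finset.sum_eq_zero; intro u hu
      exact (h01 u).resolve_right (Finset.mem_filter.mp hu).2
    rw [← ht, h1, h2, add_zero]
  · intro w hw
    have hw' := Finset.mem_Icc.mp hw
    by_cases hfw : f w = 1
    · have hsub : Finset.Icc w J ⊆ t := by
        intro u hu
        have hu' := Finset.mem_Icc.mp hu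
        have humem : u ∈ Finset.Icc 1 J := Finset.mem_Icc.mpr ⟨le_trans hw'.1 hu'.1, hu'.2⟩
        refine Finset.mem_filter.mpr ⟨humem, ?_⟩
        have hle := hmono w u hw humem hu'.1
        rcases h01 u with h | h
        · rw [hfw, h] at hle; linarith
        · exact h
      have hcard : J + 1 - w ≤ t.card := by
        calc J + 1 - w = (Finset.Icc w J).card := (Nat.card_Icc w J).symm
        _ ≤ t.card := Finset.card_le_card hsub
      rw [hfw, if_pos (by omega)]
    · have hfw0 : f w = 0 := (h01 w).resolve_right hfw
      have hsub : t ⊆ Finset.Icc (w + 1) J := by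
        intro u hu
        obtain ⟨hu1, hu2⟩ := Finset.mem_filter.mp hu
        have hu1' := Finset.mem_Icc.mp hu1
        refine Finset.mem_Icc.mpr ⟨?_, hu1'.2⟩
        by_contra hc
        push_neg at hc
        have hle := hmono u w hu1 hw (by omega)
        rw [hu2, hfw0] at hle; linarith
      have hcard : t.card ≤ J - w := by
        calc t.card ≤ (Finset.Icc (w + 1) J).card := Finset.card_le_card hsub
        _ = J - w := by rw [Nat.card_Icc]; omega
      rw [hfw0, if_neg (by omega)]


section Infra

variable {Ω : Type*} {𝒳 : Type*} [MeasurableSpace Ω] [MeasurableSpace 𝒳]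

/-- The joint map of the potential variables. -/
def Tmap (X : Ω → 𝒳) (S Y : ℕ → Ω → ℝ) : Ω → 𝒳 × (ℕ → ℝ) × (ℕ → ℝ) :=
  fun ω => (X ω, fun w => S w ω, fun w => Y w ω)

/-- The σ-algebra generated by all the potential variables. -/
def mT (X : Ω → 𝒳) (S Y : ℕ → Ω → ℝ) : MeasurableSpace Ω :=
  MeasurableSpace.comap (Tmap X S Y) inferInstance

variable {X : Ω → 𝒳} {S Y : ℕ → Ω → ℝ}

lemma measurable_Tmap (hX : Measurable X) (hSm : ∀ w, Measurable (S w))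
    (hYm : ∀ w, Measurable (Y w)) : Measurable (Tmap X S Y) :=
  hX.prodMk ((measurable_pi_lambda _ hSm).prodMk (measurable_pi_lambda _ hYm))

lemma measurable_Tmap_mT : Measurable[mT X S Y] (Tmap X S Y) :=
  Measurable.of_comap_le le_rfl

lemma mT_le (hX : Measurable X) (hSm : ∀ w, Measurable (S w))
    (hYm : ∀ w, Measurable (Y w)) : mT X S Y ≤ (inferInstance : MeasurableSpace Ω) :=
  (measurable_Tmap hX hSm hYm).comap_le

lemma mX_le_mT : mX X ≤ mT X S Y :=
  Measurable.comap_le (measurable_fst.comp (measurable_Tmap_mT (Y := Y) (S := S)))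

lemma measurable_S_mT (w : ℕ) : Measurable[mT X S Y] (S w) :=
  (measurable_pi_apply w).comp
    ((measurable_fst.comp measurable_snd).comp (measurable_Tmap_mT (Y := Y)))

lemma measurable_Y_mT (w : ℕ) : Measurable[mT X S Y] (Y w) :=
  (measurable_pi_apply w).comp
    ((measurable_snd.comp measurable_snd).comp (measurable_Tmap_mT (S := S)))

lemma measurable_indic_comap {Z : Ω → ℕ} (w : ℕ) :
    Measurable[MeasurableSpace.comap Z inferInstance] (indic Z w) :=
  (measurable_from_top (f := fun n : ℕ => if n = w then (1 : ℝ) else 0)).comp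
    (Measurable.of_comap_le le_rfl)

end Infra

set_option maxHeartbeats 1000000 in
/-- **mean-zero property of the efficient influence function.**
Under randomization, monotonicity, principal ignorability and positivity, with
`μ_g(z) := E[Y_z·1(G=g)]/P(G=g)`, the efficient influence function numerator `ξ_{zg}` has
mean zero. -/
theorem statement9 (P : Measure Ω) [IsProbabilityMeasure P] (J : ℕ)
    (X : Ω → 𝒳) (Z : Ω → ℕ) (S Y : ℕ → Ω → ℝ)
    (hset : Setup P J X Z S Y)
    (hrand : Randomization P J X Z S Y)
    (hmono : Monotonicity P J S)
    (hPI : PrincipalIgnorability P J X S Y)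
    (hpos : Positivity P J X S)
    (z g : ℕ) (hz : z ∈ Finset.Icc 1 J) (hg : g ∈ Finset.Icc (J - z + 1) J)
    (hPG : 0 < (P {ω | Gsum J S ω = (g : ℝ)}).toReal)
    (mz : Ω → ℝ) (hmzm : Measurable[mX X] mz)
    (hmz : (fun ω => mz ω * piZ P Z z * pscore P X S J z ω)
      =ᵐ[P] P[fun ω => Yobs J Z Y ω * Sobs J Z S ω * indic Z z ω | mX X]) :
    ∫ ω,
      (((pscore P X S J (J - g + 1) ω - pscore P X S J (J - g) ω) / pscore P X S J z ω)
          * ((indic Z z ω * (Yobs J Z Y ω * Sobs J Z S ω - mz ω * pscore P X S J z ω)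
                / piZ P Z z
              + mz ω * pscore P X S J z ω)
            - mz ω * psiS P X Z S J z ω)
        + (mz ω
            - (∫ ω', Y z ω' * indG J S g ω' ∂P) / (P {ω' | Gsum J S ω' = (g : ℝ)}).toReal)
          * (psiS P X Z S J (J - g + 1) ω - psiS P X Z S J (J - g) ω)) ∂P = 0 := by
  classical
  obtain ⟨hJ, hX, hZ, hZr, hSm, hS01, hYm, hYint⟩ := hset
  obtain ⟨hindep, hpi⟩ := hrand
  obtain ⟨c, hc, hcpos⟩ := hpos
  have hle : mX X ≤ (inferInstance : MeasurableSpace Ω) := hX.comap_le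
  have hTm0 := mT_le (S := S) (Y := Y) hX hSm hYm
  have hXT : mX X ≤ mT X S Y := mX_le_mT
  have toM : ∀ {f : Ω → ℝ}, Measurable[mT X S Y] f → Measurable f :=
    fun hf => hf.mono hTm0 le_rfl
  have toMX : ∀ {f : Ω → ℝ}, Measurable[mX X] f → Measurable f :=
    fun hf => hf.mono hle le_rfl
  have hindicm : ∀ w, Measurable (indic Z w) :=
    fun w => (measurable_indic_comap w).mono hZ.comap_le le_rfl
  have hindic_eq : ∀ w, indic Z w = Set.indicator {ω | Z ω = w} (fun _ => (1 : ℝ)) := by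
    intro w; funext ω; simp [indic, Set.indicator_apply]
  have hindic_int : ∀ w, Integrable (indic Z w) P := by
    intro w
    rw [hindic_eq w]
    exact (integrable_const (1 : ℝ)).indicator (hZ (measurableSet_singleton w))
  have hindic_avg : ∀ w, ∫ ω, indic Z w ω ∂P = piZ P Z w := by
    intro w
    rw [hindic_eq w, integral_indicator_const (1 : ℝ)
      (show MeasurableSet {ω | Z ω = w} from hZ (measurableSet_singleton w))]
    simp [piZ, measureReal_def]
  have hindic01 : ∀ w ω, 0 ≤ indic Z w ω ∧ indic Z w ω ≤ 1 := by
    intro w ω; unfold indic; split_ifs <;> norm_num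
  -- domination helper
  have hbd : ∀ (f g : Ω → ℝ), AEStronglyMeasurable f P → Integrable g P →
      (∀ᵐ ω ∂P, |f ω| ≤ g ω) → Integrable f P := fun f g hf hg h =>
    Integrable.mono' hg hf (by simpa [Real.norm_eq_abs] using h)
  have hSint : ∀ w, Integrable (S w) P := by
    intro w
    refine hbd _ (fun _ => 1) (hSm w).aestronglyMeasurable (integrable_const 1) ?_
    refine Filter.Eventually.of_forall fun ω => ?_
    rcases hS01 w ω with h | h <;> simp [h]
  -- independence: unconditional product rule
  have hIND : ∀ (w : ℕ) (H : Ω → ℝ), Measurable[mT X S Y] H → Integrable H P →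
      ∫ ω, indic Z w ω * H ω ∂P = piZ P Z w * ∫ ω, H ω ∂P := by
    intro w H hHm hHint
    have hfun : IndepFun (indic Z w) H P := by
      rw [IndepFun_iff_Indep]
      refine indep_of_indep_of_le_left (indep_of_indep_of_le_right ?_ hHm.comap_le)
        (measurable_indic_comap w).comap_le
      exact (IndepFun_iff_Indep _ _ _).mp hindep
    have h := hfun.integral_mul_eq_mul_integral (hindic_int w).aestronglyMeasurable hHint.aestronglyMeasurable
    calc ∫ ω, indic Z w ω * H ω ∂P = ∫ ω, (indic Z w * H) ω ∂P := rfl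
      _ = (∫ ω, indic Z w ω ∂P) * ∫ ω, H ω ∂P := h
      _ = piZ P Z w * ∫ ω, H ω ∂P := by rw [hindic_avg w]
  -- independence: conditional product rule
  have hCIND : ∀ (w : ℕ) (H : Ω → ℝ), Measurable[mT X S Y] H → Integrable H P →
      (P[fun ω => indic Z w ω * H ω | mX X]) =ᵐ[P]
        fun ω => piZ P Z w * (P[H | mX X]) ω := by
    intro w H hHm hHint
    have hint : Integrable (fun ω => indic Z w ω * H ω) P := by
      refine hbd _ (fun ω => |H ω|) ((hindicm w).mul (toM hHm)).aestronglyMeasurable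
        hHint.abs ?_
      refine Filter.Eventually.of_forall fun ω => ?_
      rw [abs_mul]
      calc |indic Z w ω| * |H ω| ≤ 1 * |H ω| :=
            mul_le_mul_of_nonneg_right
              (abs_le.mpr ⟨by linarith [(hindic01 w ω).1], (hindic01 w ω).2⟩)
              (abs_nonneg _)
        _ = |H ω| := one_mul _
    refine (ae_eq_condExp_of_forall_setIntegral_eq hle hint ?_ ?_ ?_).symm
    · intro s _ _
      exact (integrable_condExp.const_mul _).integrableOn
    · intro s hs _
      have hsm : MeasurableSet s := hle s hs
      have hindm : Measurable[mT X S Y] (s.indicator H) := hHm.indicator (hXT s hs)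
      have hindint : Integrable (s.indicator H) P := hHint.indicator hsm
      calc ∫ ω in s, piZ P Z w * (P[H | mX X]) ω ∂P
          = piZ P Z w * ∫ ω in s, (P[H | mX X]) ω ∂P := integral_const_mul _ _
        _ = piZ P Z w * ∫ ω in s, H ω ∂P := by rw [setIntegral_condExp hle hHint hs]
        _ = piZ P Z w * ∫ ω, s.indicator H ω ∂P := by rw [integral_indicator hsm]
        _ = ∫ ω, indic Z w ω * s.indicator H ω ∂P := (hIND w _ hindm hindint).symm
        _ = ∫ ω, s.indicator (fun ω' => indic Z w ω' * H ω') ω ∂P := by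
            congr 1; funext ω
            by_cases hω : ω ∈ s <;>
              simp [Set.indicator_of_mem, Set.indicator_of_notMem, hω]
        _ = ∫ ω in s, indic Z w ω * H ω ∂P := integral_indicator hsm
    · exact ((stronglyMeasurable_condExp (m := mX X) (μ := P) (f := H)).const_mul (piZ P Z w)).aestronglyMeasurable
  -- tower rule
  have hTOW : ∀ u V : Ω → ℝ, Measurable[mX X] u → Integrable (fun ω => u ω * V ω) P →
      Integrable V P →
      ∫ ω, u ω * V ω ∂P = ∫ ω, u ω * (P[V | mX X]) ω ∂P := by
    intro u V hu huV hV
    have h2 : (P[u * V | mX X]) =ᵐ[P] u * (P[V | mX X]) :=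
      condExp_mul_of_stronglyMeasurable_left hu.stronglyMeasurable huV hV
    calc ∫ ω, u ω * V ω ∂P = ∫ ω, (P[u * V | mX X]) ω ∂P :=
          (integral_condExp hle (f := fun ω => u ω * V ω)).symm
      _ = ∫ ω, u ω * (P[V | mX X]) ω ∂P := integral_congr_ae h2
  -- range facts
  have hz' := Finset.mem_Icc.mp hz
  have hg' := Finset.mem_Icc.mp hg
  have hgIcc : g ∈ Finset.Icc 1 J := Finset.mem_Icc.mpr ⟨by omega, hg'.2⟩
  have hw1Icc : J - g + 1 ∈ Finset.Icc 1 J := Finset.mem_Icc.mpr ⟨by omega, by omega⟩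
  have hπz : 0 < piZ P Z z := hpi z hz
  have hπz0 : piZ P Z z ≠ 0 := ne_of_gt hπz
  -- pscore facts
  have hpsm : ∀ w, Measurable[mX X] (pscore P X S J w) := by
    intro w
    unfold pscore
    split_ifs
    · exact measurable_const
    · exact measurable_const
    · exact stronglyMeasurable_condExp.measurable
  have hpscoreIcc : ∀ w ∈ Finset.Icc 1 J, pscore P X S J w = P[S w | mX X] := by
    intro w hw
    have hw' := Finset.mem_Icc.mp hw
    rw [pscore, if_neg (by omega), if_neg (by omega)]
  have hps01 : ∀ w, w ≤ J → ∀ᵐ ω ∂P, 0 ≤ pscore P X S J w ω ∧ pscore P X S J w ω ≤ 1 := by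
    intro w hw
    rcases Nat.eq_zero_or_pos w with h0 | h1
    · subst h0
      refine Filter.Eventually.of_forall fun ω => ?_
      rw [pscore, if_pos rfl]
      norm_num
    · rw [hpscoreIcc w (Finset.mem_Icc.mpr ⟨h1, hw⟩)]
      have hnn : (0 : Ω → ℝ) ≤ᵐ[P] P[S w | mX X] :=
        condExp_nonneg (Filter.Eventually.of_forall fun ω => by
          rcases hS01 w ω with h | h <;> simp [h])
      have hub : P[S w | mX X] ≤ᵐ[P] P[(fun _ => (1 : ℝ)) | mX X] :=
        condExp_mono (hSint w) (integrable_const 1)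
          (Filter.Eventually.of_forall fun ω => by
            rcases hS01 w ω with h | h <;> simp [h])
      have hcc : P[(fun _ => (1 : ℝ)) | mX X] = fun _ => (1 : ℝ) := condExp_const hle 1
      filter_upwards [hnn, hub] with ω h1' h2'
      rw [hcc] at h2'
      exact ⟨h1', h2'⟩
  have hpz_lb : ∀ᵐ ω ∂P, c ≤ (P[S z | mX X]) ω := by
    have := hcpos z hz
    rwa [hpscoreIcc z hz] at this
  -- collapse of observed quantities
  have hSobs : ∀ ω, Sobs J Z S ω = S (Z ω) ω := by
    intro ω
    unfold Sobs indic
    rw [Finset.sum_congr rfl (fun w _ => by rw [ite_mul, one_mul, zero_mul]),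
      Finset.sum_ite_eq (Finset.Icc 1 J) (Z ω) (fun w => S w ω), if_pos (hZr ω)]
  have hYobs : ∀ ω, Yobs J Z Y ω = Y (Z ω) ω := by
    intro ω
    unfold Yobs indic
    rw [Finset.sum_congr rfl (fun w _ => by rw [ite_mul, one_mul, zero_mul]),
      Finset.sum_ite_eq (Finset.Icc 1 J) (Z ω) (fun w => Y w ω), if_pos (hZr ω)]
  have hindic_one : ∀ w ω, Z ω = w → indic Z w ω = 1 := by
    intro w ω h; simp [indic, h]
  have hindic_zero : ∀ w ω, Z ω ≠ w → indic Z w ω = 0 := by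
    intro w ω h; simp [indic, h]
  -- integrability of mz
  have hmzint : Integrable mz P := by
    set R := P[fun ω => Yobs J Z Y ω * Sobs J Z S ω * indic Z z ω | mX X] with hR
    refine hbd _ (fun ω => (piZ P Z z * c)⁻¹ * |R ω|) (toMX hmzm).aestronglyMeasurable
      (integrable_condExp.abs.const_mul _) ?_
    filter_upwards [hmz, hpz_lb] with ω h1 h2
    rw [← hpscoreIcc z hz] at h2
    have hppos : 0 < pscore P X S J z ω := lt_of_lt_of_le hc h2
    have hRabs : |R ω| = |mz ω| * (piZ P Z z * pscore P X S J z ω) := by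
      rw [← h1, abs_mul, abs_mul, abs_of_nonneg hπz.le, abs_of_nonneg hppos.le, mul_assoc]
    rw [hRabs, inv_mul_eq_div, le_div_iff₀ (mul_pos hπz hc)]
    have h3 : |mz ω| * (piZ P Z z * c) ≤ |mz ω| * (piZ P Z z * pscore P X S J z ω) := by
      apply mul_le_mul_of_nonneg_left _ (abs_nonneg _)
      exact mul_le_mul_of_nonneg_left h2 hπz.le
    linarith
  -- key conditional moment identity : E[Y_z S_z | X] = m_z p_z
  have hYzSz_int : Integrable (fun ω => Y z ω * S z ω) P := by
    refine hbd _ (fun ω => |Y z ω|) ((hYm z).mul (hSm z)).aestronglyMeasurable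
      (hYint z).abs ?_
    refine Filter.Eventually.of_forall fun ω => ?_
    rw [abs_mul]
    rcases hS01 z ω with h | h <;> simp [h, abs_nonneg]
  have hobs_collapse : (fun ω => Yobs J Z Y ω * Sobs J Z S ω * indic Z z ω)
      = fun ω => indic Z z ω * (Y z ω * S z ω) := by
    funext ω
    by_cases hZω : Z ω = z
    · rw [hindic_one z ω hZω, hYobs ω, hSobs ω, hZω]; ring
    · rw [hindic_zero z ω hZω]; ring
  have hcond_YS : (P[fun ω => Y z ω * S z ω | mX X]) =ᵐ[P]
      fun ω => mz ω * (P[S z | mX X]) ω := by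
    have h2 := hCIND z (fun ω => Y z ω * S z ω) ((measurable_Y_mT z).mul (measurable_S_mT z))
      hYzSz_int
    have h1 : (fun ω => mz ω * piZ P Z z * pscore P X S J z ω) =ᵐ[P]
        fun ω => piZ P Z z * (P[fun ω => Y z ω * S z ω | mX X]) ω := by
      calc (fun ω => mz ω * piZ P Z z * pscore P X S J z ω)
          =ᵐ[P] P[fun ω => Yobs J Z Y ω * Sobs J Z S ω * indic Z z ω | mX X] := hmz
        _ = P[fun ω => indic Z z ω * (Y z ω * S z ω) | mX X] := by rw [hobs_collapse]
        _ =ᵐ[P] fun ω => piZ P Z z * (P[fun ω => Y z ω * S z ω | mX X]) ω := h2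
    filter_upwards [h1] with ω h
    rw [hpscoreIcc z hz] at h
    have : piZ P Z z * (mz ω * (P[S z | mX X]) ω) =
        piZ P Z z * (P[fun ω => Y z ω * S z ω | mX X]) ω := by
      rw [← h]; ring
    exact (mul_left_cancel₀ hπz0 this).symm
  -- a.e. monotone chain
  have hgood : ∀ᵐ ω ∂P, ∀ a b : ℕ, a ∈ Finset.Icc 1 J → b ∈ Finset.Icc 1 J → a ≤ b →
      S a ω ≤ S b ω := by
    rw [ae_all_iff]
    intro a
    rw [ae_all_iff]
    intro b
    by_cases hab : a ∈ Finset.Icc 1 J ∧ b ∈ Finset.Icc 1 J ∧ a ≤ b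
    · obtain ⟨h1, h2, h3⟩ := hab
      filter_upwards [hmono b h2 a h1 h3] with ω h _ _ _
      exact h
    · exact Filter.Eventually.of_forall fun ω h1 h2 h3 => absurd ⟨h1, h2, h3⟩ hab
  -- structure of the strata under monotonicity
  have hM : ∀ᵐ ω ∂P,
      (indG J S g ω = S (J - g + 1) ω - (if g = J then 0 else S (J - g) ω)) ∧
      ((∑ g' ∈ Finset.Icc (J - z + 1) J, indG J S g' ω) = S z ω) := by
    filter_upwards [hgood] with ω hω
    obtain ⟨n, hnJ, hsum, hval⟩ := thresh (J := J) (fun w => S w ω) (fun w => hS01 w ω)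
      (fun a b ha hb hab => hω a b ha hb hab)
    have hGn : Gsum J S ω = (n : ℝ) := hsum
    have hind : ∀ k : ℕ, indG J S k ω = if n = k then 1 else 0 := by
      intro k
      simp only [indG, Set.indicator_apply, Set.mem_setOf_eq, hGn, Nat.cast_inj]
    constructor
    · rw [hind g, hval (J - g + 1) hw1Icc]
      by_cases hgJ : g = J
      · rw [if_pos hgJ, sub_zero]
        exact if_congr (by omega) rfl rfl
      · rw [if_neg hgJ, hval (J - g) (Finset.mem_Icc.mpr ⟨by omega, by omega⟩)]
        split_ifs with h1 h2 h3 <;> (try norm_num) <;> omega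
    · rw [Finset.sum_congr rfl (fun g' _ => hind g'),
        Finset.sum_ite_eq (Finset.Icc (J - z + 1) J) n (fun _ => (1 : ℝ)),
        hval z hz]
      simp only [Finset.mem_Icc]
      exact if_congr (by omega) rfl rfl
  -- measurability/integrability for strata indicators
  have hGm : Measurable (Gsum J S) := Finset.measurable_sum _ fun i _ => hSm i
  have hGmT : Measurable[mT X S Y] (Gsum J S) :=
    Finset.measurable_sum _ fun i _ => measurable_S_mT i
  have hGset : MeasurableSet {ω | Gsum J S ω = (g : ℝ)} := hGm (measurableSet_singleton _)
  have hindGmT : ∀ k, Measurable[mT X S Y] (indG J S k) := fun k =>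
    measurable_const.indicator (hGmT (measurableSet_singleton _))
  have hindG01 : ∀ k ω, 0 ≤ indG J S k ω ∧ indG J S k ω ≤ 1 := by
    intro k ω
    unfold indG
    rw [Set.indicator_apply]
    split_ifs <;> norm_num
  have hindG_int : ∀ k, Integrable (indG J S k) P := fun k =>
    (integrable_const (1 : ℝ)).indicator (hGm (measurableSet_singleton _))
  have hYindG_int : ∀ k, Integrable (fun ω => Y z ω * indG J S k ω) P := by
    intro k
    refine hbd _ (fun ω => |Y z ω|)
      ((hYm z).mul (toM (hindGmT k))).aestronglyMeasurable (hYint z).abs ?_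
    refine Filter.Eventually.of_forall fun ω => ?_
    rw [abs_mul]
    calc |Y z ω| * |indG J S k ω| ≤ |Y z ω| * 1 :=
          mul_le_mul_of_nonneg_left
            (abs_le.mpr ⟨by linarith [(hindG01 k ω).1], (hindG01 k ω).2⟩) (abs_nonneg _)
      _ = |Y z ω| := mul_one _
  -- e_g bounds
  have heg01 : ∀ k, ∀ᵐ ω ∂P, 0 ≤ eg P X J S k ω ∧ eg P X J S k ω ≤ 1 := by
    intro k
    have hnn : (0 : Ω → ℝ) ≤ᵐ[P] P[indG J S k | mX X] :=
      condExp_nonneg (Filter.Eventually.of_forall fun ω => (hindG01 k ω).1)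
    have hub : P[indG J S k | mX X] ≤ᵐ[P] P[(fun _ => (1 : ℝ)) | mX X] :=
      condExp_mono (hindG_int k) (integrable_const 1)
        (Filter.Eventually.of_forall fun ω => (hindG01 k ω).2)
    have hcc : P[(fun _ => (1 : ℝ)) | mX X] = fun _ => (1 : ℝ) := condExp_const hle 1
    filter_upwards [hnn, hub] with ω h1' h2'
    rw [hcc] at h2'
    exact ⟨h1', h2'⟩
  -- e_g is the difference of principal scores
  have heg_eq : eg P X J S g =ᵐ[P]
      fun ω => pscore P X S J (J - g + 1) ω - pscore P X S J (J - g) ω := by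
    by_cases hgJ : g = J
    · have hM1 : indG J S g =ᵐ[P] S (J - g + 1) := by
        filter_upwards [hM] with ω h
        rw [h.1, if_pos hgJ, sub_zero]
      have hps0 : pscore P X S J (J - g) = fun _ => (0:ℝ) := by
        rw [pscore, if_pos (by omega)]
      calc eg P X J S g
          =ᵐ[P] P[S (J - g + 1) | mX X] := condExp_congr_ae hM1
        _ = fun ω => pscore P X S J (J - g + 1) ω - pscore P X S J (J - g) ω := by
            rw [hps0, hpscoreIcc (J - g + 1) hw1Icc]
            funext ω
            simp
    · have hM1 : indG J S g =ᵐ[P] fun ω => S (J - g + 1) ω - S (J - g) ω := by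
        filter_upwards [hM] with ω h
        rw [h.1, if_neg hgJ]
      have h2 : P[fun ω => S (J - g + 1) ω - S (J - g) ω | mX X] =ᵐ[P]
          fun ω => (P[S (J - g + 1) | mX X]) ω - (P[S (J - g) | mX X]) ω := by
        have h3 := condExp_sub (μ := P) (m := mX X) (hSint (J - g + 1)) (hSint (J - g))
        filter_upwards [h3] with ω h using h
      calc eg P X J S g
          =ᵐ[P] P[fun ω => S (J - g + 1) ω - S (J - g) ω | mX X] := condExp_congr_ae hM1
        _ =ᵐ[P] fun ω => (P[S (J - g + 1) | mX X]) ω - (P[S (J - g) | mX X]) ω := h2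
        _ = fun ω => pscore P X S J (J - g + 1) ω - pscore P X S J (J - g) ω := by
            rw [hpscoreIcc (J - g + 1) hw1Icc,
              hpscoreIcc (J - g) (Finset.mem_Icc.mpr ⟨by omega, by omega⟩)]
  -- principal ignorability: E[Y_z 1(G=g) | X] = m_z e_g
  have hcg : (P[fun ω => Y z ω * indG J S g ω | mX X]) =ᵐ[P]
      fun ω => mz ω * eg P X J S g ω := by
    have hPIae : ∀ᵐ ω ∂P, ∀ g' ∈ Finset.Icc (J - z + 1) J,
        (P[fun ω' => Y z ω' * indG J S g ω' | mX X]) ω * eg P X J S g' ω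
          = (P[fun ω' => Y z ω' * indG J S g' ω' | mX X]) ω * eg P X J S g ω := by
      rw [ae_all_iff]
      intro g'
      by_cases hg'' : g' ∈ Finset.Icc (J - z + 1) J
      · filter_upwards [hPI z hz g hg g' hg''] with ω h _ using h
      · exact Filter.Eventually.of_forall fun ω h => absurd h hg''
    have hsum_fun : (∑ g' ∈ Finset.Icc (J - z + 1) J, indG J S g')
        = fun ω => ∑ g' ∈ Finset.Icc (J - z + 1) J, indG J S g' ω := by
      funext ω; simp [Finset.sum_apply]
    have hsum_e : (fun ω => ∑ g' ∈ Finset.Icc (J - z + 1) J, eg P X J S g' ω) =ᵐ[P]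
        P[S z | mX X] := by
      have h1 := condExp_finsetSum (μ := P) (m := mX X)
        (s := Finset.Icc (J - z + 1) J) (f := fun g' => indG J S g')
        (fun i _ => hindG_int i)
      have h2 : P[∑ g' ∈ Finset.Icc (J - z + 1) J, indG J S g' | mX X] =ᵐ[P]
          P[S z | mX X] := by
        rw [hsum_fun]
        exact condExp_congr_ae (by filter_upwards [hM] with ω h using h.2)
      have h3 : (fun ω => ∑ g' ∈ Finset.Icc (J - z + 1) J, eg P X J S g' ω) =ᵐ[P]
          P[∑ g' ∈ Finset.Icc (J - z + 1) J, indG J S g' | mX X] := by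
        filter_upwards [h1] with ω h
        simp only [Finset.sum_apply] at h
        rw [h]
        rfl
      exact h3.trans h2
    have hYsum_fun : (∑ g' ∈ Finset.Icc (J - z + 1) J, (fun ω => Y z ω * indG J S g' ω))
        = fun ω => Y z ω * ∑ g' ∈ Finset.Icc (J - z + 1) J, indG J S g' ω := by
      funext ω
      simp [Finset.sum_apply, Finset.mul_sum]
    have hsum_c : (fun ω => ∑ g' ∈ Finset.Icc (J - z + 1) J,
        (P[fun ω' => Y z ω' * indG J S g' ω' | mX X]) ω) =ᵐ[P]
        fun ω => mz ω * (P[S z | mX X]) ω := by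
      have h1 := condExp_finsetSum (μ := P) (m := mX X)
        (s := Finset.Icc (J - z + 1) J) (f := fun g' => fun ω => Y z ω * indG J S g' ω)
        (fun i _ => hYindG_int i)
      have h2 : P[∑ g' ∈ Finset.Icc (J - z + 1) J, (fun ω => Y z ω * indG J S g' ω) | mX X]
          =ᵐ[P] fun ω => mz ω * (P[S z | mX X]) ω := by
        rw [hYsum_fun]
        have h4 : (fun ω => Y z ω * ∑ g' ∈ Finset.Icc (J - z + 1) J, indG J S g' ω) =ᵐ[P]
            fun ω => Y z ω * S z ω := by
          filter_upwards [hM] with ω h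
          rw [h.2]
        exact (condExp_congr_ae h4).trans hcond_YS
      have h3 : (fun ω => ∑ g' ∈ Finset.Icc (J - z + 1) J,
          (P[fun ω' => Y z ω' * indG J S g' ω' | mX X]) ω) =ᵐ[P]
          P[∑ g' ∈ Finset.Icc (J - z + 1) J, (fun ω => Y z ω * indG J S g' ω) | mX X] := by
        filter_upwards [h1] with ω h
        simp only [Finset.sum_apply] at h
        rw [h]
      exact h3.trans h2
    have hkey : ∀ᵐ ω ∂P,
        (P[fun ω' => Y z ω' * indG J S g ω' | mX X]) ω * (P[S z | mX X]) ω
          = (mz ω * eg P X J S g ω) * (P[S z | mX X]) ω := by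
      filter_upwards [hPIae, hsum_e, hsum_c] with ω h1 h2 h3
      calc (P[fun ω' => Y z ω' * indG J S g ω' | mX X]) ω * (P[S z | mX X]) ω
          = (P[fun ω' => Y z ω' * indG J S g ω' | mX X]) ω *
              ∑ g' ∈ Finset.Icc (J - z + 1) J, eg P X J S g' ω := by rw [h2]
        _ = ∑ g' ∈ Finset.Icc (J - z + 1) J,
              (P[fun ω' => Y z ω' * indG J S g ω' | mX X]) ω * eg P X J S g' ω :=
            Finset.mul_sum _ _ _
        _ = ∑ g' ∈ Finset.Icc (J - z + 1) J,
              (P[fun ω' => Y z ω' * indG J S g' ω' | mX X]) ω * eg P X J S g ω :=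
            Finset.sum_congr rfl fun g' hg'' => h1 g' hg''
        _ = (∑ g' ∈ Finset.Icc (J - z + 1) J,
              (P[fun ω' => Y z ω' * indG J S g' ω' | mX X]) ω) * eg P X J S g ω :=
            (Finset.sum_mul _ _ _).symm
        _ = (mz ω * (P[S z | mX X]) ω) * eg P X J S g ω := by rw [h3]
        _ = (mz ω * eg P X J S g ω) * (P[S z | mX X]) ω := by ring
    filter_upwards [hkey, hpz_lb] with ω h1 h2
    exact mul_right_cancel₀ (ne_of_gt (lt_of_lt_of_le hc h2)) h1
  -- consequences on total expectations
  have hint_mzeg : Integrable (fun ω => mz ω * eg P X J S g ω) P := by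
    refine hbd _ (fun ω => |mz ω|)
      ((toMX hmzm).mul (toMX stronglyMeasurable_condExp.measurable)).aestronglyMeasurable
      hmzint.abs ?_
    filter_upwards [heg01 g] with ω h
    rw [abs_mul]
    calc |mz ω| * |eg P X J S g ω| ≤ |mz ω| * 1 :=
          mul_le_mul_of_nonneg_left (abs_le.mpr ⟨by linarith [h.1], h.2⟩) (abs_nonneg _)
      _ = |mz ω| := mul_one _
  have hEYG : ∫ ω, Y z ω * indG J S g ω ∂P = ∫ ω, mz ω * eg P X J S g ω ∂P := by
    rw [← integral_condExp hle (f := fun ω => Y z ω * indG J S g ω)]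
    exact integral_congr_ae hcg
  have hEeg : ∫ ω, eg P X J S g ω ∂P = (P {ω | Gsum J S ω = (g : ℝ)}).toReal := by
    unfold eg
    rw [integral_condExp hle]
    unfold indG
    rw [integral_indicator_const (1 : ℝ) hGset]
    simp [measureReal_def]
  -- notation for the final computation
  have hz0' : z ≠ 0 := by omega
  have hPG0 : (P {ω' | Gsum J S ω' = (g : ℝ)}).toReal ≠ 0 := ne_of_gt hPG
  have hQm : Measurable[mX X]
      (fun ω => (pscore P X S J (J - g + 1) ω - pscore P X S J (J - g) ω)
        / pscore P X S J z ω) := ((hpsm _).sub (hpsm _)).div (hpsm z)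
  have hQbd : ∀ᵐ ω ∂P, |(pscore P X S J (J - g + 1) ω - pscore P X S J (J - g) ω)
      / pscore P X S J z ω| ≤ c⁻¹ := by
    filter_upwards [hps01 (J - g + 1) (by omega), hps01 (J - g) (by omega), hcpos z hz]
      with ω h1 h2 h3
    have hd : 0 < pscore P X S J z ω := lt_of_lt_of_le hc h3
    rw [abs_div, abs_of_nonneg hd.le, div_le_iff₀ hd]
    have h4 : |pscore P X S J (J - g + 1) ω - pscore P X S J (J - g) ω| ≤ 1 :=
      abs_le.mpr ⟨by linarith [h1.1, h1.2, h2.1, h2.2], by linarith [h1.1, h1.2, h2.1, h2.2]⟩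
    have h5 : (1 : ℝ) ≤ c⁻¹ * pscore P X S J z ω := by
      rw [← inv_mul_cancel₀ (ne_of_gt hc)]
      exact mul_le_mul_of_nonneg_left h3 (inv_nonneg.mpr hc.le)
    linarith
  -- the A-part has zero mean
  have hintK1 : Integrable (fun ω => (pscore P X S J (J - g + 1) ω - pscore P X S J (J - g) ω)
      / pscore P X S J z ω * (Y z ω * S z ω)) P := by
    refine hbd _ (fun ω => c⁻¹ * |Y z ω|)
      ((toMX hQm).mul ((hYm z).mul (hSm z))).aestronglyMeasurable
      ((hYint z).abs.const_mul _) ?_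
    filter_upwards [hQbd] with ω h
    rw [abs_mul, abs_mul]
    have hS1 : |S z ω| ≤ 1 := by rcases hS01 z ω with h' | h' <;> simp [h']
    calc |(pscore P X S J (J - g + 1) ω - pscore P X S J (J - g) ω) / pscore P X S J z ω|
          * (|Y z ω| * |S z ω|) ≤ c⁻¹ * (|Y z ω| * 1) := by
          apply mul_le_mul h _ (by positivity) (by positivity)
          exact mul_le_mul_of_nonneg_left hS1 (abs_nonneg _)
      _ = c⁻¹ * |Y z ω| := by rw [mul_one]
  have hintK2 : Integrable (fun ω => ((pscore P X S J (J - g + 1) ω - pscore P X S J (J - g) ω)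
      / pscore P X S J z ω * mz ω) * S z ω) P := by
    refine hbd _ (fun ω => c⁻¹ * |mz ω|)
      (((toMX hQm).mul (toMX hmzm)).mul (hSm z)).aestronglyMeasurable
      (hmzint.abs.const_mul _) ?_
    filter_upwards [hQbd] with ω h
    rw [abs_mul, abs_mul]
    have hS1 : |S z ω| ≤ 1 := by rcases hS01 z ω with h' | h' <;> simp [h']
    calc |(pscore P X S J (J - g + 1) ω - pscore P X S J (J - g) ω) / pscore P X S J z ω|
          * |mz ω| * |S z ω| ≤ (c⁻¹ * |mz ω|) * 1 := by
          apply mul_le_mul _ hS1 (abs_nonneg _) (by positivity)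
          exact mul_le_mul_of_nonneg_right h (abs_nonneg _)
      _ = c⁻¹ * |mz ω| := by rw [mul_one]
  have hK0 : ∫ ω, (pscore P X S J (J - g + 1) ω - pscore P X S J (J - g) ω)
      / pscore P X S J z ω * ((Y z ω - mz ω) * S z ω) ∂P = 0 := by
    have hsplit : ∀ ω, (pscore P X S J (J - g + 1) ω - pscore P X S J (J - g) ω)
        / pscore P X S J z ω * ((Y z ω - mz ω) * S z ω)
        = (pscore P X S J (J - g + 1) ω - pscore P X S J (J - g) ω)
            / pscore P X S J z ω * (Y z ω * S z ω)
          - ((pscore P X S J (J - g + 1) ω - pscore P X S J (J - g) ω)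
            / pscore P X S J z ω * mz ω) * S z ω := fun ω => by ring
    rw [integral_congr_ae (Filter.Eventually.of_forall hsplit), integral_sub hintK1 hintK2]
    have e1 : ∫ ω, (pscore P X S J (J - g + 1) ω - pscore P X S J (J - g) ω)
        / pscore P X S J z ω * (Y z ω * S z ω) ∂P
        = ∫ ω, (pscore P X S J (J - g + 1) ω - pscore P X S J (J - g) ω)
            / pscore P X S J z ω * (mz ω * (P[S z | mX X]) ω) ∂P := by
      rw [hTOW _ _ hQm hintK1 hYzSz_int]
      exact integral_congr_ae (by filter_upwards [hcond_YS] with ω h; rw [h])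
    have e2 : ∫ ω, ((pscore P X S J (J - g + 1) ω - pscore P X S J (J - g) ω)
        / pscore P X S J z ω * mz ω) * S z ω ∂P
        = ∫ ω, (pscore P X S J (J - g + 1) ω - pscore P X S J (J - g) ω)
            / pscore P X S J z ω * (mz ω * (P[S z | mX X]) ω) ∂P := by
      rw [hTOW (fun ω => (pscore P X S J (J - g + 1) ω - pscore P X S J (J - g) ω)
          / pscore P X S J z ω * mz ω) _ (hQm.mul hmzm) hintK2 (hSint z)]
      exact integral_congr_ae (Filter.Eventually.of_forall fun ω => by ring)
    rw [e1, e2, sub_self]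
  have hintA : Integrable (fun ω => indic Z z ω
      * ((pscore P X S J (J - g + 1) ω - pscore P X S J (J - g) ω) / pscore P X S J z ω
        * ((Y z ω - mz ω) * S z ω)) / piZ P Z z) P := by
    refine hbd _ (fun ω => (piZ P Z z)⁻¹ * (c⁻¹ * (|Y z ω| + |mz ω|)))
      ((((hindicm z).mul ((toMX hQm).mul (((hYm z).sub (toMX hmzm)).mul
        (hSm z)))).div_const _)).aestronglyMeasurable
      ((((hYint z).abs.add hmzint.abs).const_mul c⁻¹).const_mul (piZ P Z z)⁻¹) ?_
    filter_upwards [hQbd] with ω h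
    have hS1 : |S z ω| ≤ 1 := by rcases hS01 z ω with h' | h' <;> simp [h']
    have hI1 : |indic Z z ω| ≤ 1 :=
      abs_le.mpr ⟨by linarith [(hindic01 z ω).1], (hindic01 z ω).2⟩
    rw [abs_div, abs_of_nonneg hπz.le, div_eq_inv_mul]
    apply mul_le_mul_of_nonneg_left _ (inv_nonneg.mpr hπz.le)
    rw [abs_mul, abs_mul, abs_mul]
    calc |indic Z z ω| * (|(pscore P X S J (J - g + 1) ω - pscore P X S J (J - g) ω)
          / pscore P X S J z ω| * (|Y z ω - mz ω| * |S z ω|))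
        ≤ 1 * (c⁻¹ * ((|Y z ω| + |mz ω|) * 1)) := by
          apply mul_le_mul hI1 _ (by positivity) (by norm_num)
          apply mul_le_mul h _ (by positivity) (by positivity)
          exact mul_le_mul (abs_sub _ _) hS1 (abs_nonneg _) (by positivity)
      _ = c⁻¹ * (|Y z ω| + |mz ω|) := by ring
  have hA0 : ∫ ω, indic Z z ω
      * ((pscore P X S J (J - g + 1) ω - pscore P X S J (J - g) ω) / pscore P X S J z ω
        * ((Y z ω - mz ω) * S z ω)) / piZ P Z z ∂P = 0 := by
    have hKm : Measurable[mT X S Y]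
        (fun ω => (pscore P X S J (J - g + 1) ω - pscore P X S J (J - g) ω)
          / pscore P X S J z ω * ((Y z ω - mz ω) * S z ω)) :=
      (hQm.mono hXT le_rfl).mul (((measurable_Y_mT z).sub (hmzm.mono hXT le_rfl)).mul
        (measurable_S_mT z))
    have hKint : Integrable (fun ω => (pscore P X S J (J - g + 1) ω
        - pscore P X S J (J - g) ω) / pscore P X S J z ω * ((Y z ω - mz ω) * S z ω)) P := by
      refine hbd _ (fun ω => c⁻¹ * (|Y z ω| + |mz ω|)) (toM hKm).aestronglyMeasurable
        (((hYint z).abs.add hmzint.abs).const_mul _) ?_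
      filter_upwards [hQbd] with ω h
      have hS1 : |S z ω| ≤ 1 := by rcases hS01 z ω with h' | h' <;> simp [h']
      rw [abs_mul, abs_mul]
      apply mul_le_mul h _ (by positivity) (by positivity)
      exact le_trans (mul_le_mul (abs_sub _ _) hS1 (abs_nonneg _) (by positivity))
        (mul_one _).le
    have h1 : ∫ ω, indic Z z ω
        * ((pscore P X S J (J - g + 1) ω - pscore P X S J (J - g) ω) / pscore P X S J z ω
          * ((Y z ω - mz ω) * S z ω)) / piZ P Z z ∂P
        = (∫ ω, indic Z z ω
          * ((pscore P X S J (J - g + 1) ω - pscore P X S J (J - g) ω) / pscore P X S J z ω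
            * ((Y z ω - mz ω) * S z ω)) ∂P) / piZ P Z z := integral_div _ _
    rw [h1, hIND z _ hKm hKint, hK0, mul_zero, zero_div]
  -- the B-part has zero mean
  have hu_m : Measurable[mX X] (fun ω => mz ω - (∫ ω', Y z ω' * indG J S g ω' ∂P)
      / (P {ω' | Gsum J S ω' = (g : ℝ)}).toReal) := hmzm.sub measurable_const
  have hu_int : Integrable (fun ω => mz ω - (∫ ω', Y z ω' * indG J S g ω' ∂P)
      / (P {ω' | Gsum J S ω' = (g : ℝ)}).toReal) P := hmzint.sub (integrable_const _)
  have hu_abs : Integrable (fun ω => |mz ω - (∫ ω', Y z ω' * indG J S g ω' ∂P)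
      / (P {ω' | Gsum J S ω' = (g : ℝ)}).toReal|) P := hu_int.abs
  have hup_int : ∀ w, w ≤ J → Integrable (fun ω => (mz ω
      - (∫ ω', Y z ω' * indG J S g ω' ∂P) / (P {ω' | Gsum J S ω' = (g : ℝ)}).toReal)
      * pscore P X S J w ω) P := by
    intro w hw
    refine hbd _ _ ((toMX hu_m).mul (toMX (hpsm w))).aestronglyMeasurable hu_abs ?_
    filter_upwards [hps01 w hw] with ω h
    rw [abs_mul]
    calc _ ≤ |mz ω - (∫ ω', Y z ω' * indG J S g ω' ∂P)
          / (P {ω' | Gsum J S ω' = (g : ℝ)}).toReal| * 1 :=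
        mul_le_mul_of_nonneg_left (abs_le.mpr ⟨by linarith [h.1], h.2⟩) (abs_nonneg _)
      _ = _ := mul_one _
  have hPSIint : ∀ w, w ≤ J → Integrable (fun ω => (mz ω
      - (∫ ω', Y z ω' * indG J S g ω' ∂P) / (P {ω' | Gsum J S ω' = (g : ℝ)}).toReal)
      * psiS P X Z S J w ω) P := by
    intro w hw
    rcases Nat.eq_zero_or_pos w with h0 | h1
    · subst h0
      have : (fun ω => (mz ω - (∫ ω', Y z ω' * indG J S g ω' ∂P)
          / (P {ω' | Gsum J S ω' = (g : ℝ)}).toReal) * psiS P X Z S J 0 ω)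
          = fun _ => (0 : ℝ) := by
        funext ω
        rw [psiS, if_pos rfl, mul_zero]
      rw [this]
      exact integrable_const 0
    · have hπw : 0 < piZ P Z w := hpi w (Finset.mem_Icc.mpr ⟨h1, hw⟩)
      have hψ_eq : psiS P X Z S J w = fun ω =>
          indic Z w ω * (Sobs J Z S ω - pscore P X S J w ω) / piZ P Z w
          + pscore P X S J w ω := by
        rw [psiS, if_neg (by omega)]
      have hψm : Measurable (psiS P X Z S J w) := by
        rw [hψ_eq]
        exact ((((hindicm w).mul ((Finset.measurable_sum _ fun i _ =>
          (hindicm i).mul (hSm i)).sub (toMX (hpsm w)))).div_const _).add (toMX (hpsm w)))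
      refine hbd _ (fun ω => (2 / piZ P Z w + 1) * |mz ω
        - (∫ ω', Y z ω' * indG J S g ω' ∂P) / (P {ω' | Gsum J S ω' = (g : ℝ)}).toReal|)
        ((toMX hu_m).mul hψm).aestronglyMeasurable (hu_abs.const_mul _) ?_
      filter_upwards [hps01 w hw] with ω h
      rw [abs_mul, mul_comm]
      apply mul_le_mul_of_nonneg_right _ (abs_nonneg _)
      rw [hψ_eq]
      have hSobs1 : |Sobs J Z S ω| ≤ 1 := by
        rw [hSobs ω]
        rcases hS01 (Z ω) ω with h' | h' <;> simp [h']
      have hI1 : |indic Z w ω| ≤ 1 :=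
        abs_le.mpr ⟨by linarith [(hindic01 w ω).1], (hindic01 w ω).2⟩
      calc |indic Z w ω * (Sobs J Z S ω - pscore P X S J w ω) / piZ P Z w
            + pscore P X S J w ω|
          ≤ |indic Z w ω * (Sobs J Z S ω - pscore P X S J w ω) / piZ P Z w|
            + |pscore P X S J w ω| := abs_add_le _ _
        _ ≤ 2 / piZ P Z w + 1 := by
            apply add_le_add _ (abs_le.mpr ⟨by linarith [h.1], h.2⟩)
            rw [abs_div, abs_of_nonneg hπw.le, div_le_div_iff_of_pos_right hπw, abs_mul]
            have h6 : |Sobs J Z S ω - pscore P X S J w ω| ≤ 2 := by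
              have := abs_sub (Sobs J Z S ω) (pscore P X S J w ω)
              have h7 : |pscore P X S J w ω| ≤ 1 := abs_le.mpr ⟨by linarith [h.1], h.2⟩
              linarith
            calc |indic Z w ω| * |Sobs J Z S ω - pscore P X S J w ω| ≤ 1 * 2 :=
                  mul_le_mul hI1 h6 (abs_nonneg _) (by norm_num)
              _ = 2 := by norm_num
  -- ∫ u ψ_w = ∫ u p_w
  have hPSI : ∀ w, w ≤ J → ∫ ω, (mz ω - (∫ ω', Y z ω' * indG J S g ω' ∂P) / (P {ω' | Gsum J S ω' = (g : ℝ)}).toReal) * psiS P X Z S J w ω ∂P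
      = ∫ ω, (mz ω - (∫ ω', Y z ω' * indG J S g ω' ∂P) / (P {ω' | Gsum J S ω' = (g : ℝ)}).toReal) * pscore P X S J w ω ∂P := by
    intro w hw
    rcases Nat.eq_zero_or_pos w with h0 | h1
    · subst h0
      have e1 : ∀ ω : Ω, (mz ω - (∫ ω', Y z ω' * indG J S g ω' ∂P) / (P {ω' | Gsum J S ω' = (g : ℝ)}).toReal) * psiS P X Z S J 0 ω = 0 := by
        intro ω
        rw [psiS, if_pos rfl, mul_zero]
      have e2 : ∀ ω : Ω, (mz ω - (∫ ω', Y z ω' * indG J S g ω' ∂P) / (P {ω' | Gsum J S ω' = (g : ℝ)}).toReal) * pscore P X S J 0 ω = 0 := by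
        intro ω
        rw [pscore, if_pos rfl, mul_zero]
      rw [integral_congr_ae (Filter.Eventually.of_forall e1),
        integral_congr_ae (Filter.Eventually.of_forall e2)]
    · have hwIcc : w ∈ Finset.Icc 1 J := Finset.mem_Icc.mpr ⟨h1, hw⟩
      have hπw : 0 < piZ P Z w := hpi w hwIcc
      have hψpt : ∀ ω, (mz ω - (∫ ω', Y z ω' * indG J S g ω' ∂P) / (P {ω' | Gsum J S ω' = (g : ℝ)}).toReal) * psiS P X Z S J w ω
          = indic Z w ω * ((mz ω - (∫ ω', Y z ω' * indG J S g ω' ∂P) / (P {ω' | Gsum J S ω' = (g : ℝ)}).toReal) * (S w ω - pscore P X S J w ω) / piZ P Z w)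
            + (mz ω - (∫ ω', Y z ω' * indG J S g ω' ∂P) / (P {ω' | Gsum J S ω' = (g : ℝ)}).toReal) * pscore P X S J w ω := by
        intro ω
        rw [psiS, if_neg (by omega)]
        by_cases hZω : Z ω = w
        · rw [show Sobs J Z S ω = S w ω from by rw [hSobs ω, hZω]]
          ring
        · rw [hindic_zero w ω hZω]
          ring
      have hVm : Measurable[mT X S Y]
          (fun ω => (mz ω - (∫ ω', Y z ω' * indG J S g ω' ∂P) / (P {ω' | Gsum J S ω' = (g : ℝ)}).toReal) * (S w ω - pscore P X S J w ω) / piZ P Z w) :=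
        ((hu_m.mono hXT le_rfl).mul ((measurable_S_mT w).sub
          ((hpsm w).mono hXT le_rfl))).div_const _
      have hVint : Integrable
          (fun ω => (mz ω - (∫ ω', Y z ω' * indG J S g ω' ∂P) / (P {ω' | Gsum J S ω' = (g : ℝ)}).toReal) * (S w ω - pscore P X S J w ω) / piZ P Z w) P := by
        refine hbd _ (fun ω => (piZ P Z w)⁻¹ * (2 * |mz ω - (∫ ω', Y z ω' * indG J S g ω' ∂P) / (P {ω' | Gsum J S ω' = (g : ℝ)}).toReal|))
          (toM hVm).aestronglyMeasurable ((hu_abs.const_mul 2).const_mul _) ?_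
        filter_upwards [hps01 w hw] with ω h
        rw [abs_div, abs_of_nonneg hπw.le, div_eq_inv_mul]
        apply mul_le_mul_of_nonneg_left _ (inv_nonneg.mpr hπw.le)
        rw [abs_mul]
        have h7 : |S w ω - pscore P X S J w ω| ≤ 2 := by
          have h6 := abs_sub (S w ω) (pscore P X S J w ω)
          have h8 : |pscore P X S J w ω| ≤ 1 := abs_le.mpr ⟨by linarith [h.1], h.2⟩
          have h9 : |S w ω| ≤ 1 := by rcases hS01 w ω with h' | h' <;> simp [h']
          linarith
        calc |mz ω - (∫ ω', Y z ω' * indG J S g ω' ∂P) / (P {ω' | Gsum J S ω' = (g : ℝ)}).toReal| * |S w ω - pscore P X S J w ω|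
            ≤ |mz ω - (∫ ω', Y z ω' * indG J S g ω' ∂P) / (P {ω' | Gsum J S ω' = (g : ℝ)}).toReal| * 2 := mul_le_mul_of_nonneg_left h7 (abs_nonneg _)
          _ = 2 * |mz ω - (∫ ω', Y z ω' * indG J S g ω' ∂P) / (P {ω' | Gsum J S ω' = (g : ℝ)}).toReal| := mul_comm _ _
      have hfirst_int : Integrable (fun ω => indic Z w ω
          * ((mz ω - (∫ ω', Y z ω' * indG J S g ω' ∂P) / (P {ω' | Gsum J S ω' = (g : ℝ)}).toReal) * (S w ω - pscore P X S J w ω) / piZ P Z w)) P := by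
        refine hbd _ (fun ω => |(mz ω - (∫ ω', Y z ω' * indG J S g ω' ∂P) / (P {ω' | Gsum J S ω' = (g : ℝ)}).toReal) * (S w ω - pscore P X S J w ω) / piZ P Z w|)
          ((hindicm w).mul (toM hVm)).aestronglyMeasurable hVint.abs ?_
        refine Filter.Eventually.of_forall fun ω => ?_
        simp only [abs_mul]
        have h10 := mul_le_mul_of_nonneg_right
          (show |indic Z w ω| ≤ 1 from
            abs_le.mpr ⟨by linarith [(hindic01 w ω).1], (hindic01 w ω).2⟩)
          (abs_nonneg ((mz ω - (∫ ω', Y z ω' * indG J S g ω' ∂P)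
            / (P {ω' | Gsum J S ω' = (g : ℝ)}).toReal)
            * (S w ω - pscore P X S J w ω) / piZ P Z w))
        linarith [h10]
      have huS_int : Integrable (fun ω => (mz ω - (∫ ω', Y z ω' * indG J S g ω' ∂P) / (P {ω' | Gsum J S ω' = (g : ℝ)}).toReal) * S w ω) P := by
        refine hbd _ (fun ω => |mz ω - (∫ ω', Y z ω' * indG J S g ω' ∂P) / (P {ω' | Gsum J S ω' = (g : ℝ)}).toReal|)
          ((toMX hu_m).mul (hSm w)).aestronglyMeasurable hu_abs ?_
        refine Filter.Eventually.of_forall fun ω => ?_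
        rw [abs_mul]
        have h9 : |S w ω| ≤ 1 := by rcases hS01 w ω with h' | h' <;> simp [h']
        calc |mz ω - (∫ ω', Y z ω' * indG J S g ω' ∂P) / (P {ω' | Gsum J S ω' = (g : ℝ)}).toReal| * |S w ω| ≤ |mz ω - (∫ ω', Y z ω' * indG J S g ω' ∂P) / (P {ω' | Gsum J S ω' = (g : ℝ)}).toReal| * 1 :=
              mul_le_mul_of_nonneg_left h9 (abs_nonneg _)
          _ = |mz ω - (∫ ω', Y z ω' * indG J S g ω' ∂P) / (P {ω' | Gsum J S ω' = (g : ℝ)}).toReal| := mul_one _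
      have hfirst : ∫ ω, indic Z w ω
          * ((mz ω - (∫ ω', Y z ω' * indG J S g ω' ∂P) / (P {ω' | Gsum J S ω' = (g : ℝ)}).toReal) * (S w ω - pscore P X S J w ω) / piZ P Z w) ∂P = 0 := by
        rw [hIND w _ hVm hVint]
        have h2 : ∫ ω, (mz ω - (∫ ω', Y z ω' * indG J S g ω' ∂P) / (P {ω' | Gsum J S ω' = (g : ℝ)}).toReal) * (S w ω - pscore P X S J w ω) / piZ P Z w ∂P
            = (∫ ω, (mz ω - (∫ ω', Y z ω' * indG J S g ω' ∂P) / (P {ω' | Gsum J S ω' = (g : ℝ)}).toReal) * (S w ω - pscore P X S J w ω) ∂P) / piZ P Z w :=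
          integral_div _ _
        have h3 : ∫ ω, (mz ω - (∫ ω', Y z ω' * indG J S g ω' ∂P) / (P {ω' | Gsum J S ω' = (g : ℝ)}).toReal) * (S w ω - pscore P X S J w ω) ∂P = 0 := by
          have hsplit : ∀ ω, (mz ω - (∫ ω', Y z ω' * indG J S g ω' ∂P) / (P {ω' | Gsum J S ω' = (g : ℝ)}).toReal) * (S w ω - pscore P X S J w ω)
              = (mz ω - (∫ ω', Y z ω' * indG J S g ω' ∂P) / (P {ω' | Gsum J S ω' = (g : ℝ)}).toReal) * S w ω - (mz ω - (∫ ω', Y z ω' * indG J S g ω' ∂P) / (P {ω' | Gsum J S ω' = (g : ℝ)}).toReal) * pscore P X S J w ω := fun ω => by ring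
          rw [integral_congr_ae (Filter.Eventually.of_forall hsplit),
            integral_sub huS_int (hup_int w hw)]
          rw [hTOW _ (S w) hu_m huS_int (hSint w), ← hpscoreIcc w hwIcc, sub_self]
        rw [h2, h3, zero_div, mul_zero]
      rw [integral_congr_ae (Filter.Eventually.of_forall hψpt),
        integral_add hfirst_int (hup_int w hw), hfirst, zero_add]
  -- B-part is centered
  have hB0 : ∫ ω, (mz ω - (∫ ω', Y z ω' * indG J S g ω' ∂P) / (P {ω' | Gsum J S ω' = (g : ℝ)}).toReal)
      * (psiS P X Z S J (J - g + 1) ω - psiS P X Z S J (J - g) ω) ∂P = 0 := by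
    have hsplit : ∀ ω, (mz ω - (∫ ω', Y z ω' * indG J S g ω' ∂P) / (P {ω' | Gsum J S ω' = (g : ℝ)}).toReal)
        * (psiS P X Z S J (J - g + 1) ω - psiS P X Z S J (J - g) ω)
        = (mz ω - (∫ ω', Y z ω' * indG J S g ω' ∂P) / (P {ω' | Gsum J S ω' = (g : ℝ)}).toReal) * psiS P X Z S J (J - g + 1) ω
          - (mz ω - (∫ ω', Y z ω' * indG J S g ω' ∂P) / (P {ω' | Gsum J S ω' = (g : ℝ)}).toReal) * psiS P X Z S J (J - g) ω := fun ω => by ring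
    rw [integral_congr_ae (Filter.Eventually.of_forall hsplit),
      integral_sub (hPSIint (J - g + 1) (by omega)) (hPSIint (J - g) (by omega)),
      hPSI (J - g + 1) (by omega), hPSI (J - g) (by omega),
      ← integral_sub (hup_int (J - g + 1) (by omega)) (hup_int (J - g) (by omega))]
    have h1 : ∫ ω, ((mz ω - (∫ ω', Y z ω' * indG J S g ω' ∂P) / (P {ω' | Gsum J S ω' = (g : ℝ)}).toReal) * pscore P X S J (J - g + 1) ω
        - (mz ω - (∫ ω', Y z ω' * indG J S g ω' ∂P) / (P {ω' | Gsum J S ω' = (g : ℝ)}).toReal) * pscore P X S J (J - g) ω) ∂P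
        = ∫ ω, (mz ω - (∫ ω', Y z ω' * indG J S g ω' ∂P) / (P {ω' | Gsum J S ω' = (g : ℝ)}).toReal) * eg P X J S g ω ∂P := by
      refine integral_congr_ae ?_
      filter_upwards [heg_eq] with ω h
      rw [h]
      ring
    rw [h1]
    have h2 : ∫ ω, (mz ω - (∫ ω', Y z ω' * indG J S g ω' ∂P) / (P {ω' | Gsum J S ω' = (g : ℝ)}).toReal) * eg P X J S g ω ∂P
        = ∫ ω, mz ω * eg P X J S g ω ∂P - (∫ ω', Y z ω' * indG J S g ω' ∂P) / (P {ω' | Gsum J S ω' = (g : ℝ)}).toReal * ∫ ω, eg P X J S g ω ∂P := by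
      have hsplit2 : ∀ ω, (mz ω - (∫ ω', Y z ω' * indG J S g ω' ∂P) / (P {ω' | Gsum J S ω' = (g : ℝ)}).toReal) * eg P X J S g ω
          = mz ω * eg P X J S g ω - (∫ ω', Y z ω' * indG J S g ω' ∂P) / (P {ω' | Gsum J S ω' = (g : ℝ)}).toReal * eg P X J S g ω := fun ω => by ring
      rw [integral_congr_ae (Filter.Eventually.of_forall hsplit2),
        integral_sub hint_mzeg (show Integrable (fun ω =>
          (∫ ω', Y z ω' * indG J S g ω' ∂P) / (P {ω' | Gsum J S ω' = (g : ℝ)}).toReal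
            * eg P X J S g ω) P from integrable_condExp.const_mul _),
        integral_const_mul]
    rw [h2, ← hEYG, hEeg, div_mul_cancel₀ _ hPG0, sub_self]
  -- pointwise decomposition of the integrand
  have hpoint : ∀ ω,
      (((pscore P X S J (J - g + 1) ω - pscore P X S J (J - g) ω) / pscore P X S J z ω)
          * ((indic Z z ω * (Yobs J Z Y ω * Sobs J Z S ω - mz ω * pscore P X S J z ω)
                / piZ P Z z
              + mz ω * pscore P X S J z ω)
            - mz ω * psiS P X Z S J z ω)
        + (mz ω - (∫ ω', Y z ω' * indG J S g ω' ∂P) / (P {ω' | Gsum J S ω' = (g : ℝ)}).toReal)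
          * (psiS P X Z S J (J - g + 1) ω - psiS P X Z S J (J - g) ω))
      = indic Z z ω
          * ((pscore P X S J (J - g + 1) ω - pscore P X S J (J - g) ω) / pscore P X S J z ω
            * ((Y z ω - mz ω) * S z ω)) / piZ P Z z
        + (mz ω - (∫ ω', Y z ω' * indG J S g ω' ∂P) / (P {ω' | Gsum J S ω' = (g : ℝ)}).toReal)
          * (psiS P X Z S J (J - g + 1) ω - psiS P X Z S J (J - g) ω) := by
    intro ω
    have hψz : psiS P X Z S J z ω = indic Z z ω
        * (Sobs J Z S ω - pscore P X S J z ω) / piZ P Z z + pscore P X S J z ω := by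
      rw [psiS, if_neg hz0']
    rw [hψz]
    by_cases hZω : Z ω = z
    · rw [show Sobs J Z S ω = S z ω from by rw [hSobs ω, hZω],
        show Yobs J Z Y ω = Y z ω from by rw [hYobs ω, hZω]]
      generalize (pscore P X S J (J - g + 1) ω - pscore P X S J (J - g) ω)
        / pscore P X S J z ω = qq
      generalize (∫ ω', Y z ω' * indG J S g ω' ∂P)
        / (P {ω' | Gsum J S ω' = (g : ℝ)}).toReal = mv
      field_simp
      ring
    · rw [hindic_zero z ω hZω]
      generalize (pscore P X S J (J - g + 1) ω - pscore P X S J (J - g) ω)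
        / pscore P X S J z ω = qq
      ring
  have hintB : Integrable (fun ω => (mz ω - (∫ ω', Y z ω' * indG J S g ω' ∂P) / (P {ω' | Gsum J S ω' = (g : ℝ)}).toReal)
      * (psiS P X Z S J (J - g + 1) ω - psiS P X Z S J (J - g) ω)) P := by
    have hsplit : ∀ ω, (mz ω - (∫ ω', Y z ω' * indG J S g ω' ∂P) / (P {ω' | Gsum J S ω' = (g : ℝ)}).toReal)
        * (psiS P X Z S J (J - g + 1) ω - psiS P X Z S J (J - g) ω)
        = (mz ω - (∫ ω', Y z ω' * indG J S g ω' ∂P) / (P {ω' | Gsum J S ω' = (g : ℝ)}).toReal) * psiS P X Z S J (J - g + 1) ω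
          - (mz ω - (∫ ω', Y z ω' * indG J S g ω' ∂P) / (P {ω' | Gsum J S ω' = (g : ℝ)}).toReal) * psiS P X Z S J (J - g) ω := fun ω => by ring
    exact ((hPSIint (J - g + 1) (by omega)).sub (hPSIint (J - g) (by omega))).congr
      (Filter.Eventually.of_forall fun ω => (hsplit ω).symm)
  rw [integral_congr_ae (Filter.Eventually.of_forall hpoint),
    integral_add hintA hintB, hA0, hB0, add_zero]






end TruncationByDeath
end
end

section
/- (Population double robustness of the DR estimating function.) Fix z ∈ {1,...,J} and g ∈ {J−z+1,...,J}. Let p̃_w : 𝒳 → [c, 1−c] for w ∈ {J−g, J−g+1, z} (with c ∈ (0, 1/2)) and m̃_z : 𝒳 → ℝ be bounded measurable working functions, with the convention p̃_0 := 0. Define ψ̃_{S,w} := 1(Z=w)·(S − p̃_w(X))/π_w + p̃_w(X) (with ψ̃_{S,0} := 0) and ξ̃ := ((p̃_{J−g+1}(X) − p̃_{J−g}(X))/p̃_z(X))·1(Z=z)·S·(Y − m̃_z(X))/π_z + m̃_z(X)·(ψ̃_{S,J−g+1} − ψ̃_{S,J−g}). If either (i) p̃_w = p_w(X) P-a.s.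 for all w ∈ {J−g, J−g+1, z}, or (ii) m̃_z = m_z(X) P-a.s., then under randomization, monotonicity, principal ignorability and positivity: E[ξ̃] = E[Y_z·1(G=g)] and E[ψ̃_{S,J−g+1} − ψ̃_{S,J−g}] = P(G=g); in particular, if P(G=g) > 0 then E[ξ̃]/E[ψ̃_{S,J−g+1} − ψ̃_{S,J−g}] = E[Y_z·1(G=g)]/P(G=g). -/
open MeasureTheory ProbabilityTheory

noncomputable section

namespace TruncationByDeath

variable {Ω : Type*} {𝒳 : Type*} [MeasurableSpace Ω] [MeasurableSpace 𝒳]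

/-- Working principal score `p̃_w(X)`, with the convention `p̃_0 := 0`. -/
def workP (X : Ω → 𝒳) (pt : ℕ → 𝒳 → ℝ) (w : ℕ) : Ω → ℝ :=
  if w = 0 then fun _ => 0 else fun ω => pt w (X ω)

/-- Augmented survival term built from working principal scores, with `ψ̃_{S,0} := 0`. -/
def psiSW (P : Measure Ω) (X : Ω → 𝒳) (Z : Ω → ℕ) (S : ℕ → Ω → ℝ) (J : ℕ)
    (pt : ℕ → 𝒳 → ℝ) (w : ℕ) : Ω → ℝ :=
  if w = 0 then fun _ => 0
  else fun ω =>
    indic Z w ω * (Sobs J Z S ω - workP X pt w ω) / piZ P Z w + workP X pt w ω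

set_option linter.unusedVariables false
set_option linter.unusedSectionVars false

section AuxHelpers

private lemma telescope0 (F : ℕ → ℝ) (n : ℕ) :
    ∑ w ∈ Finset.Icc 1 n, (F w - F (w - 1)) = F n - F 0 := by
  induction n with
  | zero => simp
  | succ n ih =>
    rw [Finset.sum_Icc_succ_top (Nat.le_add_left 1 n), ih]
    simp

private lemma telescope {J z : ℕ} (hz1 : 1 ≤ z) (hzJ : z ≤ J) (F : ℕ → ℝ) (h0 : F 0 = 0) :
    ∑ g' ∈ Finset.Icc (J - z + 1) J, (F (J - g' + 1) - F (J - g')) = F z := by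
  have : ∑ g' ∈ Finset.Icc (J - z + 1) J, (F (J - g' + 1) - F (J - g'))
      = ∑ w ∈ Finset.Icc 1 z, (F w - F (w - 1)) := by
    refine Finset.sum_nbij' (fun g' => J + 1 - g') (fun w => J + 1 - w) ?_ ?_ ?_ ?_ ?_
    · intro a ha
      simp only [Finset.mem_Icc] at ha ⊢
      omega
    · intro a ha
      simp only [Finset.mem_Icc] at ha ⊢
      omega
    · intro a ha
      simp only [Finset.mem_Icc] at ha
      omega
    · intro a ha
      simp only [Finset.mem_Icc] at ha
      omega
    · intro a ha
      simp only [Finset.mem_Icc] at ha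
      have h1 : J - a + 1 = J + 1 - a := by omega
      have h2 : J - a = J + 1 - a - 1 := by omega
      rw [h1, h2]
  rw [this, telescope0, h0, sub_zero]

private lemma sum_ones {a J : ℕ} (s : ℕ → ℝ) (h1 : ∀ w, a < w → w ≤ J → s w = 1) :
    ∑ w ∈ Finset.Ioc a J, s w = ((J - a : ℕ) : ℝ) := by
  rw [Finset.sum_congr rfl (fun w hw => h1 w (Finset.mem_Ioc.mp hw).1 (Finset.mem_Ioc.mp hw).2)]
  simp [Nat.card_Ioc]

private lemma strata_aux {J g : ℕ} (s : ℕ → ℝ) (h01 : ∀ w, s w = 0 ∨ s w = 1)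
    (hmono : ∀ z' z, 1 ≤ z' → z' ≤ z → z ≤ J → s z' ≤ s z)
    (hg1 : 1 ≤ g) (hgJ : g ≤ J) :
    (if (∑ w ∈ Finset.Icc 1 J, s w) = (g : ℝ) then (1:ℝ) else 0)
      = s (J - g + 1) - (if J - g = 0 then 0 else s (J - g)) := by
  have hnn : ∀ w, (0:ℝ) ≤ s w := fun w => by rcases h01 w with h | h <;> simp [h]
  have hle1 : ∀ w, s w ≤ 1 := fun w => by rcases h01 w with h | h <;> simp [h]
  have hsplit : ∀ a, a ≤ J → ∑ w ∈ Finset.Icc 1 J, s w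
      = (∑ w ∈ Finset.Ioc 0 a, s w) + ∑ w ∈ Finset.Ioc a J, s w := by
    intro a haJ
    rw [show Finset.Icc 1 J = Finset.Ioc 0 J from Finset.Icc_add_one_left_eq_Ioc 0 J]
    exact (Finset.sum_Ioc_consecutive _ (Nat.zero_le a) haJ).symm
  rcases h01 (J - g + 1) with htop | htop
  · -- s (J-g+1) = 0 : sum ≤ g - 1 < g, RHS = 0
    have hlow : (if J - g = 0 then (0:ℝ) else s (J - g)) = 0 := by
      by_cases h : J - g = 0
      · simp [h]
      · rw [if_neg h]
        have := hmono (J - g) (J - g + 1) (by omega) (by omega) (by omega)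
        have := hnn (J - g)
        linarith
    rw [htop, hlow, if_neg]
    · ring
    · -- sum ≠ g
      have hzero : ∀ w, 1 ≤ w → w ≤ J - g + 1 → s w = 0 := by
        intro w h1w h2w
        have := hmono w (J - g + 1) h1w h2w (by omega)
        have := hnn w
        linarith
      have hJg1 : J - g + 1 ≤ J := by omega
      rw [hsplit (J - g + 1) hJg1]
      have h1 : ∑ w ∈ Finset.Ioc 0 (J - g + 1), s w = 0 := by
        apply Finset.sum_eq_zero
        intro w hw
        simp only [Finset.mem_Ioc] at hw
        exact hzero w hw.1 hw.2
      have h2 : ∑ w ∈ Finset.Ioc (J - g + 1) J, s w ≤ ((J - (J - g + 1) : ℕ) : ℝ) := by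
        calc ∑ w ∈ Finset.Ioc (J - g + 1) J, s w ≤ ∑ w ∈ Finset.Ioc (J - g + 1) J, 1 :=
          Finset.sum_le_sum (fun w _ => hle1 w)
        _ = ((J - (J - g + 1) : ℕ) : ℝ) := by simp [Nat.card_Ioc]
      have hcast : ((J - (J - g + 1) : ℕ) : ℝ) = (g : ℝ) - 1 := by
        have : (J - (J - g + 1) : ℕ) = g - 1 := by omega
        rw [this]
        have : ((g - 1 : ℕ) : ℝ) = (g : ℝ) - 1 := by
          push_cast [Nat.cast_sub hg1]
          ring
        rw [this]
      intro hcontra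
      rw [h1, zero_add] at hcontra
      rw [hcontra, hcast] at h2
      linarith [show (0:ℝ) < 1 by norm_num]
  · -- s (J-g+1) = 1
    by_cases hlow : J - g = 0 ∨ s (J - g) = 0
    · -- sum = g, RHS = 1
      have h2 : ∑ w ∈ Finset.Ioc (J - g) J, s w = ((J - (J - g) : ℕ) : ℝ) := by
        apply sum_ones
        intro w hw1 hw2
        have h := hmono (J - g + 1) w (by omega) (by omega) hw2
        have := hle1 w
        rw [htop] at h
        linarith
      have h1 : ∑ w ∈ Finset.Ioc 0 (J - g), s w = 0 := by
        apply Finset.sum_eq_zero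
        intro w hw
        simp only [Finset.mem_Ioc] at hw
        rcases hlow with h | h
        · omega
        · have hm := hmono w (J - g) hw.1 hw.2 (by omega)
          have := hnn w
          rw [h] at hm
          linarith
      have hsum : ∑ w ∈ Finset.Icc 1 J, s w = (g : ℝ) := by
        rw [hsplit (J - g) (by omega), h1, zero_add, h2]
        congr 1
        omega
      rw [if_pos hsum, htop]
      rcases hlow with h | h
      · simp [h]
      · by_cases h' : J - g = 0
        · simp [h']
        · rw [if_neg h', h]
          ring
    · -- J - g ≠ 0 and s (J - g) = 1 : sum ≥ g + 1, RHS = 0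
      push_neg at hlow
      obtain ⟨hJg, hsJg⟩ := hlow
      have hsJg1 : s (J - g) = 1 := by
        rcases h01 (J - g) with h | h
        · exact absurd h hsJg
        · exact h
      have h2 : ∑ w ∈ Finset.Ioc (J - g - 1) J, s w = ((J - (J - g - 1) : ℕ) : ℝ) := by
        apply sum_ones
        intro w hw1 hw2
        have h := hmono (J - g) w (by omega) (by omega) hw2
        have := hle1 w
        rw [hsJg1] at h
        linarith
      have hge : (g : ℝ) + 1 ≤ ∑ w ∈ Finset.Icc 1 J, s w := by
        rw [hsplit (J - g - 1) (by omega), h2]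
        have h1 : (0:ℝ) ≤ ∑ w ∈ Finset.Ioc 0 (J - g - 1), s w :=
          Finset.sum_nonneg (fun w _ => hnn w)
        have : ((J - (J - g - 1) : ℕ) : ℝ) = (g : ℝ) + 1 := by
          have : (J - (J - g - 1) : ℕ) = g + 1 := by omega
          rw [this]; push_cast; ring
        linarith
      rw [if_neg (by intro h; rw [h] at hge; linarith), htop, if_neg hJg, hsJg1]
      ring


variable {P : Measure Ω} [IsProbabilityMeasure P] {X : Ω → 𝒳} {Z : Ω → ℕ}

private lemma integrable_of_bdd {f : Ω → ℝ} (hf : AEStronglyMeasurable f P) {C : ℝ}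
    (h : ∀ ω, |f ω| ≤ C) : Integrable f P :=
  ⟨hf, HasFiniteIntegral.of_bounded (C := C)
    (Filter.Eventually.of_forall (by simpa only [Real.norm_eq_abs] using h))⟩

private lemma measurable_mX (X : Ω → 𝒳) : Measurable[mX X] X := fun s hs => ⟨s, hs, rfl⟩

private lemma sm_comp (X : Ω → 𝒳) {h : 𝒳 → ℝ} (hh : Measurable h) :
    StronglyMeasurable[mX X] fun ω => h (X ω) :=
  (hh.comp (measurable_mX X)).stronglyMeasurable

private lemma pullout (hX : Measurable X) {f V : Ω → ℝ}
    (hf : StronglyMeasurable[mX X] f) {c : ℝ} (hfb : ∀ ω, |f ω| ≤ c)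
    (hV : Integrable V P) :
    ∫ ω, f ω * V ω ∂P = ∫ ω, f ω * (P[V|mX X]) ω ∂P := by
  have hm : mX X ≤ _ := hX.comap_le
  have hbd : ∀ᵐ ω ∂P, ‖f ω‖ ≤ c :=
    Filter.Eventually.of_forall (by simpa only [Real.norm_eq_abs] using hfb)
  have hint : Integrable (fun ω => f ω * V ω) P :=
    hV.bdd_mul ((hf.mono hm).aestronglyMeasurable) hbd
  have h1 := condExp_stronglyMeasurable_mul_of_bound hm hf hV c hbd
  calc ∫ ω, f ω * V ω ∂P = ∫ ω, (P[fun ω => f ω * V ω|mX X]) ω ∂P :=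
        (integral_condExp hm).symm
    _ = ∫ ω, f ω * (P[V|mX X]) ω ∂P := by
        refine integral_congr_ae ?_
        filter_upwards [h1] with ω h
        exact h

private lemma integral_indic (hZ : Measurable Z) (w : ℕ) :
    ∫ ω, indic Z w ω ∂P = piZ P Z w := by
  have hs : MeasurableSet {ω | Z ω = w} := hZ (measurableSet_singleton w)
  have h : indic Z w = Set.indicator {ω | Z ω = w} (fun _ => (1:ℝ)) := by
    funext ω
    simp [indic, Set.indicator_apply, Set.mem_setOf_eq]
  rw [h, integral_indicator_const _ hs]
  simp [piZ, measureReal_def]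

private lemma indep_integral_mul {β : Type*} [MeasurableSpace β] {T : Ω → β}
    (hT : Measurable T) (hZ : Measurable Z) (hind : IndepFun Z T P)
    (w : ℕ) (φ : β → ℝ) (hφ : Measurable φ) :
    ∫ ω, indic Z w ω * φ (T ω) ∂P = piZ P Z w * ∫ ω, φ (T ω) ∂P := by
  have hι : Measurable (fun n : ℕ => if n = w then (1:ℝ) else 0) := measurable_from_top
  have h : IndepFun (fun ω => if Z ω = w then (1:ℝ) else 0) (fun ω => φ (T ω)) P :=
    hind.comp hι hφ
  have h2 := h.integral_fun_mul_eq_mul_integral ((hι.comp hZ).aestronglyMeasurable)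
    ((hφ.comp hT).aestronglyMeasurable)
  have h3 : ∫ ω, (if Z ω = w then (1:ℝ) else 0) ∂P = piZ P Z w := integral_indic hZ w
  simpa [indic, h3] using h2

private lemma condexp_indic_mul {β : Type*} [MeasurableSpace β] {T : Ω → β} {pr : β → 𝒳}
    (hT : Measurable T) (hpr : Measurable pr) (hX : Measurable X)
    (hcomp : ∀ ω, pr (T ω) = X ω)
    (hZ : Measurable Z) (hind : IndepFun Z T P) (w : ℕ) (φ : β → ℝ) (hφ : Measurable φ)
    (hint : Integrable (fun ω => φ (T ω)) P) :
    (fun ω => piZ P Z w * (P[fun ω' => φ (T ω')|mX X]) ω)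
      =ᵐ[P] P[fun ω' => indic Z w ω' * φ (T ω')|mX X] := by
  have hm : mX X ≤ _ := hX.comap_le
  have hindm : Measurable (indic Z w) :=
    (measurable_from_top (f := fun n : ℕ => if n = w then (1:ℝ) else 0)).comp hZ
  have hindb : ∀ᵐ ω ∂P, ‖indic Z w ω‖ ≤ 1 := by
    refine Filter.Eventually.of_forall fun ω => ?_
    simp only [indic, Real.norm_eq_abs]
    split <;> simp
  refine ae_eq_condExp_of_forall_setIntegral_eq hm
    (hint.bdd_mul hindm.aestronglyMeasurable hindb) (fun s _ _ => ?_) ?_ ?_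
  · exact (integrable_condExp.const_mul _).integrableOn
  · rintro s ⟨B, hB, rfl⟩ _
    have hs : MeasurableSet[mX X] (X ⁻¹' B) := ⟨B, hB, rfl⟩
    have hsm : MeasurableSet (X ⁻¹' B) := hX hB
    have hφ' : Measurable (fun b => B.indicator (fun _ => (1:ℝ)) (pr b) * φ b) :=
      ((measurable_one.indicator hB).comp hpr).mul hφ
    calc ∫ ω in X ⁻¹' B, piZ P Z w * (P[fun ω' => φ (T ω')|mX X]) ω ∂P
        = piZ P Z w * ∫ ω in X ⁻¹' B, (P[fun ω' => φ (T ω')|mX X]) ω ∂P := by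
          rw [integral_const_mul]
      _ = piZ P Z w * ∫ ω in X ⁻¹' B, φ (T ω) ∂P := by
          rw [setIntegral_condExp hm hint hs]
      _ = piZ P Z w * ∫ ω, (fun b => B.indicator (fun _ => (1:ℝ)) (pr b) * φ b) (T ω) ∂P := by
          rw [← integral_indicator hsm]
          congr 1
          refine integral_congr_ae (Filter.Eventually.of_forall fun ω => ?_)
          by_cases h : X ω ∈ B <;>
            simp [Set.indicator_apply, hcomp, Set.mem_preimage, h]
      _ = ∫ ω, indic Z w ω * (fun b => B.indicator (fun _ => (1:ℝ)) (pr b) * φ b) (T ω) ∂P :=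
          (indep_integral_mul hT hZ hind w _ hφ').symm
      _ = ∫ ω in X ⁻¹' B, indic Z w ω * φ (T ω) ∂P := by
          rw [← integral_indicator hsm]
          refine integral_congr_ae (Filter.Eventually.of_forall fun ω => ?_)
          by_cases h : X ω ∈ B <;>
            simp [Set.indicator_apply, hcomp, Set.mem_preimage, h, indic]
  · exact (stronglyMeasurable_condExp.const_mul _).aestronglyMeasurable

end AuxHelpers

/-- **population double robustness of the DR estimating function.**
If either the working principal scores or the working outcome regression is correct, then
`E[ξ̃] = E[Y_z·1(G=g)]` and `E[ψ̃_{S,J−g+1} − ψ̃_{S,J−g}] = P(G=g)`; in particular, if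
`P(G=g) > 0` the ratio identifies `E[Y_z·1(G=g)]/P(G=g)`. -/
theorem statement10 (P : Measure Ω) [IsProbabilityMeasure P] (J : ℕ)
    (X : Ω → 𝒳) (Z : Ω → ℕ) (S Y : ℕ → Ω → ℝ)
    (hset : Setup P J X Z S Y)
    (hrand : Randomization P J X Z S Y)
    (hmono : Monotonicity P J S)
    (hPI : PrincipalIgnorability P J X S Y)
    (hpos : Positivity P J X S)
    (z g : ℕ) (hz : z ∈ Finset.Icc 1 J) (hg : g ∈ Finset.Icc (J - z + 1) J)
    (mz : Ω → ℝ) (hmzm : Measurable[mX X] mz)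
    (hmz : (fun ω => mz ω * piZ P Z z * pscore P X S J z ω)
      =ᵐ[P] P[fun ω => Yobs J Z Y ω * Sobs J Z S ω * indic Z z ω | mX X])
    (cw : ℝ) (hcw : 0 < cw ∧ cw < 1 / 2)
    (pt : ℕ → 𝒳 → ℝ) (mt : 𝒳 → ℝ)
    (hptm : ∀ w ∈ ({J - g, J - g + 1, z} : Set ℕ), Measurable (pt w))
    (hptb : ∀ w ∈ ({J - g, J - g + 1, z} : Set ℕ), w ≠ 0 →
      ∀ x, pt w x ∈ Set.Icc cw (1 - cw))
    (hmtm : Measurable mt) (hmtb : ∃ C, ∀ x, |mt x| ≤ C)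
    (hdr : (∀ w ∈ ({J - g, J - g + 1, z} : Set ℕ), workP X pt w =ᵐ[P] pscore P X S J w)
      ∨ (fun ω => mt (X ω)) =ᵐ[P] mz) :
    (∫ ω,
        ((workP X pt (J - g + 1) ω - workP X pt (J - g) ω) / workP X pt z ω
            * (indic Z z ω * Sobs J Z S ω * (Yobs J Z Y ω - mt (X ω)) / piZ P Z z)
          + mt (X ω) * (psiSW P X Z S J pt (J - g + 1) ω - psiSW P X Z S J pt (J - g) ω)) ∂P
      = ∫ ω, Y z ω * indG J S g ω ∂P) ∧
    (∫ ω, (psiSW P X Z S J pt (J - g + 1) ω - psiSW P X Z S J pt (J - g) ω) ∂P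
      = (P {ω | Gsum J S ω = (g : ℝ)}).toReal) ∧
    (0 < (P {ω | Gsum J S ω = (g : ℝ)}).toReal →
      (∫ ω,
          ((workP X pt (J - g + 1) ω - workP X pt (J - g) ω) / workP X pt z ω
              * (indic Z z ω * Sobs J Z S ω * (Yobs J Z Y ω - mt (X ω)) / piZ P Z z)
            + mt (X ω)
              * (psiSW P X Z S J pt (J - g + 1) ω - psiSW P X Z S J pt (J - g) ω)) ∂P)
        / (∫ ω, (psiSW P X Z S J pt (J - g + 1) ω - psiSW P X Z S J pt (J - g) ω) ∂P)
        = (∫ ω, Y z ω * indG J S g ω ∂P) / (P {ω | Gsum J S ω = (g : ℝ)}).toReal) := by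
  classical
  obtain ⟨hind, hpi⟩ := hrand
  obtain ⟨hcw0, hcw2⟩ := hcw
  obtain ⟨z1, zJ⟩ := Finset.mem_Icc.mp hz
  obtain ⟨glo, gJ⟩ := Finset.mem_Icc.mp hg
  have g1 : 1 ≤ g := by omega
  have hz0 : z ≠ 0 := by omega
  obtain ⟨C0, hC0⟩ := hmtb
  set C : ℝ := max C0 0 with hCdef
  have hC : ∀ x, |mt x| ≤ C := fun x => le_trans (hC0 x) (le_max_left _ _)
  have hCnn : 0 ≤ C := le_max_right _ _
  have hX := hset.hX
  have hZ := hset.hZ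
  have hm : mX X ≤ _ := hX.comap_le
  have hzpos : 0 < piZ P Z z := hpi z hz
  -- the joint variable T and independence
  set T : Ω → 𝒳 × (ℕ → ℝ) × (ℕ → ℝ) := fun ω => (X ω, fun i => S i ω, fun i => Y i ω)
    with hT_def
  have hT : Measurable T :=
    hX.prodMk ((measurable_pi_lambda _ fun i => hset.hSm i).prodMk
      (measurable_pi_lambda _ fun i => hset.hYm i))
  have hindT : IndepFun Z T P := hind
  -- basic bounds and measurability
  have hindicm : ∀ w, Measurable (indic Z w) := fun w =>
    (measurable_from_top (f := fun n : ℕ => if n = w then (1:ℝ) else 0)).comp hZ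
  have hindicb : ∀ w ω, |indic Z w ω| ≤ 1 := by
    intro w ω
    simp only [indic]
    split <;> norm_num
  have hSb : ∀ w ω, |S w ω| ≤ 1 := by
    intro w ω
    rcases hset.hS01 w ω with h | h <;> simp [h]
  have hSint : ∀ w, Integrable (S w) P := fun w =>
    integrable_of_bdd (hset.hSm w).aestronglyMeasurable (hSb w)
  have hmtXm : Measurable (fun ω => mt (X ω)) := hmtm.comp hX
  have hmtXint : Integrable (fun ω => mt (X ω)) P :=
    integrable_of_bdd hmtXm.aestronglyMeasurable (fun ω => hC (X ω))
  -- membership facts for the working-score index set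
  have hmemA : J - g ∈ ({J - g, J - g + 1, z} : Set ℕ) := by simp
  have hmemB : J - g + 1 ∈ ({J - g, J - g + 1, z} : Set ℕ) := by simp
  have hmemz : z ∈ ({J - g, J - g + 1, z} : Set ℕ) := by simp
  have hpt01 : ∀ w ∈ ({J - g, J - g + 1, z} : Set ℕ), w ≠ 0 → ∀ x,
      0 ≤ pt w x ∧ pt w x ≤ 1 := by
    intro w hw hw0 x
    obtain ⟨ha, hb⟩ := hptb w hw hw0 x
    constructor <;> nlinarith
  have hptzc : ∀ x, cw ≤ pt z x := fun x => (hptb z hmemz hz0 x).1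
  -- observed = potential on {Z = w}
  have hSobs : ∀ ω, Sobs J Z S ω = S (Z ω) ω := by
    intro ω
    rw [Sobs, Finset.sum_eq_single_of_mem (Z ω) (hset.hZr ω)]
    · simp [indic]
    · intro b _ hb
      simp only [indic]
      rw [if_neg fun h => hb h.symm, zero_mul]
  have hYobs : ∀ ω, Yobs J Z Y ω = Y (Z ω) ω := by
    intro ω
    rw [Yobs, Finset.sum_eq_single_of_mem (Z ω) (hset.hZr ω)]
    · simp [indic]
    · intro b _ hb
      simp only [indic]
      rw [if_neg fun h => hb h.symm, zero_mul]
  have hSobsb : ∀ ω, |Sobs J Z S ω| ≤ 1 := fun ω => by rw [hSobs]; exact hSb _ ω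
  have hSobsm : Measurable (Sobs J Z S) :=
    Finset.measurable_sum _ fun i _ => (hindicm i).mul (hset.hSm i)
  have hindic_pull : ∀ (f : ℕ → Ω → ℝ) w ω,
      indic Z w ω * f (Z ω) ω = indic Z w ω * f w ω := by
    intro f w ω
    simp only [indic]
    split
    · next h => rw [h]
    · simp
  have hobsS : ∀ w ω, indic Z w ω * Sobs J Z S ω = indic Z w ω * S w ω := by
    intro w ω
    rw [hSobs]
    exact hindic_pull (fun w ω => S w ω) w ω
  have hobsYS : ∀ ω, indic Z z ω * (Y z ω * S z ω)
      = Yobs J Z Y ω * Sobs J Z S ω * indic Z z ω := by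
    intro ω
    rw [hSobs, hYobs]
    simp only [indic]
    split
    · next h => rw [h]; ring
    · ring
  have hobsSY : ∀ ω, indic Z z ω * Sobs J Z S ω * (Yobs J Z Y ω - mt (X ω))
      = indic Z z ω * (S z ω * (Y z ω - mt (X ω))) := by
    intro ω
    rw [hSobs, hYobs]
    simp only [indic]
    split
    · next h => rw [h]; ring
    · simp
  -- a.e. monotonicity, all ranks simultaneously
  have amono : ∀ᵐ ω ∂P, ∀ z1 z2 : ℕ, 1 ≤ z2 → z2 ≤ z1 → z1 ≤ J → S z2 ω ≤ S z1 ω := by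
    rw [ae_all_iff]
    intro a
    rw [ae_all_iff]
    intro b
    by_cases h : 1 ≤ b ∧ b ≤ a ∧ a ≤ J
    · obtain ⟨h1, h2, h3⟩ := h
      filter_upwards [hmono a (Finset.mem_Icc.mpr ⟨le_trans h1 h2, h3⟩) b
        (Finset.mem_Icc.mpr ⟨h1, le_trans h2 h3⟩) h2] with ω hω
      exact fun _ _ _ => hω
    · exact Filter.Eventually.of_forall fun ω h1 h2 h3 => absurd ⟨h1, h2, h3⟩ h
  -- indicator of stratum g'' as increment of survival indicators
  have hindG_if : ∀ g'' ω, indG J S g'' ω = if Gsum J S ω = (g'' : ℝ) then 1 else 0 := by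
    intro g'' ω
    simp [indG, Set.indicator_apply]
  have E1 : ∀ g'', 1 ≤ g'' → g'' ≤ J →
      indG J S g'' =ᵐ[P] fun ω => S (J - g'' + 1) ω
        - (if J - g'' = 0 then 0 else S (J - g'') ω) := by
    intro g'' h1 h2
    filter_upwards [amono] with ω hω
    have h := strata_aux (fun w => S w ω) (fun w => hset.hS01 w ω)
      (fun a b ha hab hbJ => hω b a ha hab hbJ) h1 h2
    rw [hindG_if]
    simp only [Gsum] at h ⊢
    exact (if_congr Iff.rfl rfl rfl).trans h
  -- survival as the sum of stratum indicators
  have E2 : (fun ω => S z ω) =ᵐ[P]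
      fun ω => ∑ g' ∈ Finset.Icc (J - z + 1) J, indG J S g' ω := by
    filter_upwards [amono] with ω hω
    have ht := telescope z1 zJ (fun w => if w = 0 then (0:ℝ) else S w ω) (by simp)
    have hterm : ∀ g' ∈ Finset.Icc (J - z + 1) J, indG J S g' ω
        = (fun w => if w = 0 then (0:ℝ) else S w ω) (J - g' + 1)
          - (fun w => if w = 0 then (0:ℝ) else S w ω) (J - g') := by
      intro g' hg'
      obtain ⟨ha, hb⟩ := Finset.mem_Icc.mp hg'
      have h := strata_aux (fun w => S w ω) (fun w => hset.hS01 w ω)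
        (fun a b hxa hab hbJ => hω b a hxa hab hbJ) (by omega) hb
      rw [hindG_if]
      simp only []
      rw [if_neg (by omega : ¬ J - g' + 1 = 0)]
      simp only [Gsum] at h ⊢
      exact (if_congr Iff.rfl rfl rfl).trans h
    rw [Finset.sum_congr rfl hterm, ht]
    simp [hz0]
  -- strata indicators: measurability and integrability
  have hGsum : Measurable (Gsum J S) := Finset.measurable_sum _ fun i _ => hset.hSm i
  have hGset : ∀ g'', MeasurableSet {ω | Gsum J S ω = ((g'' : ℕ) : ℝ)} := fun g'' =>
    hGsum (measurableSet_singleton _)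
  have hindGm : ∀ g'', Measurable (indG J S g'') := fun g'' =>
    measurable_const.indicator (hGset g'')
  have hindGb : ∀ g'' ω, |indG J S g'' ω| ≤ 1 := by
    intro g'' ω
    rw [hindG_if]
    split <;> norm_num
  have hindGint : ∀ g'', Integrable (indG J S g'') P := fun g'' =>
    integrable_of_bdd (hindGm g'').aestronglyMeasurable (hindGb g'')
  have hYSint : Integrable (fun ω => Y z ω * S z ω) P := by
    exact ((hset.hYint z).bdd_mul (hset.hSm z).aestronglyMeasurable
        (Filter.Eventually.of_forall fun ω => by
          simpa only [Real.norm_eq_abs] using hSb z ω)).congr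
        (Filter.Eventually.of_forall fun ω => mul_comm _ _)
  have hYindGint : ∀ g'', Integrable (fun ω => Y z ω * indG J S g'' ω) P := by
    intro g''
    exact ((hset.hYint z).bdd_mul (hindGm g'').aestronglyMeasurable
        (Filter.Eventually.of_forall fun ω => by
          simpa only [Real.norm_eq_abs] using hindGb g'' ω)).congr
      (Filter.Eventually.of_forall fun ω => mul_comm _ _)
  -- pscore at z
  have hqz : pscore P X S J z = P[S z | mX X] := by
    rw [pscore, if_neg hz0, if_neg (by omega : ¬ z = J + 1)]
  -- W = E[Y_z S_z | X] and its identification via m_z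
  set W : Ω → ℝ := P[fun ω => Y z ω * S z ω | mX X] with hWdef
  have hφYS : Measurable (fun t : 𝒳 × (ℕ → ℝ) × (ℕ → ℝ) => t.2.2 z * t.2.1 z) :=
    ((measurable_pi_apply z).comp (measurable_snd.comp measurable_snd)).mul
      ((measurable_pi_apply z).comp (measurable_fst.comp measurable_snd))
  have hφYSint : Integrable (fun ω => (fun t : 𝒳 × (ℕ → ℝ) × (ℕ → ℝ) => t.2.2 z * t.2.1 z)
      (T ω)) P := hYSint
  have hWπ : (fun ω => piZ P Z z * W ω) =ᵐ[P]
      (fun ω => mz ω * piZ P Z z * (P[S z | mX X]) ω) := by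
    have h1 : (fun ω => piZ P Z z * (P[fun ω' =>
        (fun t : 𝒳 × (ℕ → ℝ) × (ℕ → ℝ) => t.2.2 z * t.2.1 z) (T ω') | mX X]) ω)
        =ᵐ[P] P[fun ω' => indic Z z ω' *
          (fun t : 𝒳 × (ℕ → ℝ) × (ℕ → ℝ) => t.2.2 z * t.2.1 z) (T ω') | mX X] :=
      condexp_indic_mul hT measurable_fst hX (fun ω => rfl) hZ hindT z _ hφYS hφYSint
    have h2 : (P[fun ω' => indic Z z ω' *
          (fun t : 𝒳 × (ℕ → ℝ) × (ℕ → ℝ) => t.2.2 z * t.2.1 z) (T ω') | mX X])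
        =ᵐ[P] P[fun ω => Yobs J Z Y ω * Sobs J Z S ω * indic Z z ω | mX X] :=
      condExp_congr_ae (Filter.Eventually.of_forall fun ω => hobsYS ω)
    have h3 : (fun ω => piZ P Z z * W ω) =ᵐ[P]
        (fun ω => mz ω * piZ P Z z * pscore P X S J z ω) := by
      refine (Filter.EventuallyEq.trans ?_ (h1.trans (h2.trans hmz.symm)))
      exact Filter.EventuallyEq.rfl.mul (condExp_congr_ae
        (Filter.Eventually.of_forall fun ω => rfl))
    rw [hqz] at h3
    exact h3
  have hW : W =ᵐ[P] fun ω => mz ω * (P[S z | mX X]) ω := by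
    filter_upwards [hWπ] with ω h
    apply mul_left_cancel₀ (ne_of_gt hzpos)
    rw [h]
    ring
  -- positivity of the true principal score at z
  obtain ⟨c0, hc00, hc0all⟩ := hpos
  have hpzpos : ∀ᵐ ω ∂P, 0 < (P[S z | mX X]) ω := by
    have := hc0all z hz
    rw [hqz] at this
    filter_upwards [this] with ω h
    linarith
  -- principal ignorability: sum over strata
  have hPIall : ∀ᵐ ω ∂P, ∀ g' ∈ Finset.Icc (J - z + 1) J,
      (P[fun ω' => Y z ω' * indG J S g ω' | mX X]) ω * eg P X J S g' ω
        = (P[fun ω' => Y z ω' * indG J S g' ω' | mX X]) ω * eg P X J S g ω :=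
    (Filter.eventually_all_finset _).mpr fun g' hg' => hPI z hz g hg g' hg'
  have hsum_e : (P[S z | mX X]) =ᵐ[P]
      fun ω => ∑ g' ∈ Finset.Icc (J - z + 1) J, eg P X J S g' ω := by
    have ha := condExp_finsetSum (μ := P) (m := mX X)
      (f := fun g' => indG J S g') (s := Finset.Icc (J - z + 1) J)
      (fun g' _ => hindGint g')
    have hb : (P[S z | mX X]) =ᵐ[P]
        P[∑ g' ∈ Finset.Icc (J - z + 1) J, indG J S g' | mX X] := by
      refine condExp_congr_ae (E2.trans (Filter.Eventually.of_forall fun ω => ?_))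
      rw [Finset.sum_apply]
    refine hb.trans (ha.trans (Filter.Eventually.of_forall fun ω => ?_))
    rw [Finset.sum_apply]
    rfl
  have hsum_c : W =ᵐ[P] fun ω => ∑ g' ∈ Finset.Icc (J - z + 1) J,
      (P[fun ω' => Y z ω' * indG J S g' ω' | mX X]) ω := by
    have ha := condExp_finsetSum (μ := P) (m := mX X)
      (f := fun g' => fun ω => Y z ω * indG J S g' ω) (s := Finset.Icc (J - z + 1) J)
      (fun g' _ => hYindGint g')
    have hb : W =ᵐ[P]
        P[∑ g' ∈ Finset.Icc (J - z + 1) J, (fun ω => Y z ω * indG J S g' ω) | mX X] := by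
      refine condExp_congr_ae ?_
      filter_upwards [E2] with ω h
      simp only [Finset.sum_apply]
      rw [h, Finset.mul_sum]
    refine hb.trans (ha.trans (Filter.Eventually.of_forall fun ω => ?_))
    rw [Finset.sum_apply]
  -- the key identity: E[Y_z 1(G=g)|X] = m_z(X) e_g(X)
  have hkey : (P[fun ω' => Y z ω' * indG J S g ω' | mX X]) =ᵐ[P]
      fun ω => mz ω * eg P X J S g ω := by
    filter_upwards [hPIall, hsum_e, hsum_c, hW, hpzpos] with ω hpi' he hc hw hp
    have h1 : (P[fun ω' => Y z ω' * indG J S g ω' | mX X]) ω * (P[S z | mX X]) ω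
        = W ω * eg P X J S g ω := by
      rw [he, hc, Finset.mul_sum, Finset.sum_mul]
      exact Finset.sum_congr rfl fun g' hg' => hpi' g' hg'
    rw [hw] at h1
    have h2 : (P[fun ω' => Y z ω' * indG J S g ω' | mX X]) ω * (P[S z | mX X]) ω
        = mz ω * eg P X J S g ω * (P[S z | mX X]) ω := by
      rw [h1]; ring
    exact mul_right_cancel₀ (ne_of_gt hp) h2
  have hYG : ∫ ω, Y z ω * indG J S g ω ∂P = ∫ ω, mz ω * eg P X J S g ω ∂P := by
    rw [← integral_condExp hm (f := fun ω => Y z ω * indG J S g ω)]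
    exact integral_congr_ae hkey
    -- working score ratio f𝒳 and its properties
  set f𝒳 : 𝒳 → ℝ := fun x =>
    ((if J - g + 1 = 0 then 0 else pt (J - g + 1) x)
      - (if J - g = 0 then 0 else pt (J - g) x)) / pt z x with hfdef
  have hworkP : ∀ w ω, workP X pt w ω = if w = 0 then 0 else pt w (X ω) := by
    intro w ω
    by_cases h : w = 0 <;> simp [workP, h]
  have hf1m : Measurable (fun x => if J - g + 1 = 0 then (0:ℝ) else pt (J - g + 1) x) := by
    by_cases h : J - g + 1 = 0
    · simp only [h, if_true]
      exact measurable_const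
    · simp only [h, if_false]
      exact hptm _ hmemB
  have hf2m : Measurable (fun x => if J - g = 0 then (0:ℝ) else pt (J - g) x) := by
    by_cases h : J - g = 0
    · simp only [h, if_true]
      exact measurable_const
    · simp only [h, if_false]
      exact hptm _ hmemA
  have hfm : Measurable f𝒳 := (hf1m.sub hf2m).div (hptm z hmemz)
  have hfb : ∀ x, |f𝒳 x| ≤ 2 / cw := by
    intro x
    have h1 : |(if J - g + 1 = 0 then (0:ℝ) else pt (J - g + 1) x)| ≤ 1 := by
      split
      · norm_num
      · next h =>
        rw [abs_le]
        have := hpt01 _ hmemB h x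
        constructor <;> linarith
    have h2 : |(if J - g = 0 then (0:ℝ) else pt (J - g) x)| ≤ 1 := by
      split
      · norm_num
      · next h =>
        rw [abs_le]
        have := hpt01 _ hmemA h x
        constructor <;> linarith
    have hd : cw ≤ |pt z x| := le_trans (hptzc x) (le_abs_self _)
    have hnum : |(if J - g + 1 = 0 then (0:ℝ) else pt (J - g + 1) x)
        - (if J - g = 0 then (0:ℝ) else pt (J - g) x)| ≤ 2 := by
      refine le_trans (abs_sub _ _) ?_
      linarith
    rw [hfdef]
    simp only []
    rw [abs_div]
    exact div_le_div₀ (by norm_num) hnum hcw0 hd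
  have hf𝒳ω : ∀ ω, (workP X pt (J - g + 1) ω - workP X pt (J - g) ω) / workP X pt z ω
      = f𝒳 (X ω) := by
    intro ω
    rw [hworkP, hworkP, hworkP, if_neg hz0, hfdef]
  -- the first term of the estimating function
  set φ₁ : 𝒳 × (ℕ → ℝ) × (ℕ → ℝ) → ℝ :=
    fun t => f𝒳 t.1 * (t.2.1 z * (t.2.2 z - mt t.1)) with hφ₁def
  have hφ₁m : Measurable φ₁ :=
    (hfm.comp measurable_fst).mul
      (((measurable_pi_apply z).comp (measurable_fst.comp measurable_snd)).mul
        (((measurable_pi_apply z).comp (measurable_snd.comp measurable_snd)).sub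
          (hmtm.comp measurable_fst)))
  have hφ₁T : ∀ ω, φ₁ (T ω) = f𝒳 (X ω) * (S z ω * (Y z ω - mt (X ω))) := fun ω => rfl
  have hfSb : ∀ ω, |f𝒳 (X ω) * S z ω| ≤ 2 / cw := by
    intro ω
    rw [abs_mul]
    calc |f𝒳 (X ω)| * |S z ω| ≤ (2 / cw) * 1 :=
      mul_le_mul (hfb (X ω)) (hSb z ω) (abs_nonneg _) (by positivity)
    _ = 2 / cw := mul_one _
  have intφ₁T : Integrable (fun ω => φ₁ (T ω)) P := by
    have h : Integrable (fun ω => (f𝒳 (X ω) * S z ω) * (Y z ω - mt (X ω))) P :=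
      ((hset.hYint z).sub hmtXint).bdd_mul
        (((hfm.comp hX).mul (hset.hSm z)).aestronglyMeasurable)
        (Filter.Eventually.of_forall fun ω => by
          simpa only [Real.norm_eq_abs] using hfSb ω)
    exact h.congr (Filter.Eventually.of_forall fun ω => by simp only [hφ₁T]; ring)
  have intQ1 : Integrable (fun ω => (piZ P Z z)⁻¹ * (indic Z z ω * φ₁ (T ω))) P :=
    (intφ₁T.bdd_mul (hindicm z).aestronglyMeasurable
      (Filter.Eventually.of_forall fun ω => by
        simpa only [Real.norm_eq_abs] using hindicb z ω)).const_mul _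
  -- the augmented-survival computation, for a single index
  have hpsi_main : ∀ w, w ∈ ({J - g, J - g + 1, z} : Set ℕ) → 1 ≤ w → w ≤ J →
      ∀ (h : 𝒳 → ℝ), Measurable h → ∀ D : ℝ, (∀ x, |h x| ≤ D) →
      (∫ ω, h (X ω) * psiSW P X Z S J pt w ω ∂P = ∫ ω, h (X ω) * S w ω ∂P) ∧
      Integrable (fun ω => h (X ω) * psiSW P X Z S J pt w ω) P := by
    intro w hw hw1 hwJ h hhm D hD
    have hw0 : w ≠ 0 := by omega
    have hπ : 0 < piZ P Z w := hpi w (Finset.mem_Icc.mpr ⟨hw1, hwJ⟩)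
    have hhXm : Measurable (fun ω => h (X ω)) := hhm.comp hX
    have hptwm : Measurable (fun ω => pt w (X ω)) := (hptm w hw).comp hX
    have hptwb : ∀ ω, |pt w (X ω)| ≤ 1 := fun ω => by
      have := hpt01 w hw hw0 (X ω)
      rw [abs_le]
      constructor <;> linarith
    have hψ : ∀ ω, psiSW P X Z S J pt w ω
        = indic Z w ω * (Sobs J Z S ω - pt w (X ω)) / piZ P Z w + pt w (X ω) := by
      intro ω
      simp only [psiSW, if_neg hw0]
      rw [hworkP, if_neg hw0]
    set φ₂ : 𝒳 × (ℕ → ℝ) × (ℕ → ℝ) → ℝ := fun t => h t.1 * (t.2.1 w - pt w t.1) with hφ₂def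
    have hφ₂m : Measurable φ₂ :=
      (hhm.comp measurable_fst).mul
        (((measurable_pi_apply w).comp (measurable_fst.comp measurable_snd)).sub
          ((hptm w hw).comp measurable_fst))
    have hφ₂T : ∀ ω, φ₂ (T ω) = h (X ω) * (S w ω - pt w (X ω)) := fun ω => rfl
    have hpt_eq : ∀ ω, h (X ω) * psiSW P X Z S J pt w ω
        = (piZ P Z w)⁻¹ * (indic Z w ω * φ₂ (T ω)) + h (X ω) * pt w (X ω) := by
      intro ω
      rw [hψ ω, hφ₂T ω]
      have h3 : indic Z w ω * (Sobs J Z S ω - pt w (X ω))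
          = indic Z w ω * (S w ω - pt w (X ω)) := by
        rw [mul_sub, mul_sub, hobsS w ω]
      rw [h3]
      ring
    have int2 : Integrable (fun ω => h (X ω) * pt w (X ω)) P :=
      integrable_of_bdd (hhXm.mul hptwm).aestronglyMeasurable
        (C := D * 1) fun ω => by
          rw [abs_mul]
          exact mul_le_mul (hD (X ω)) (hptwb ω) (abs_nonneg _)
            (le_trans (abs_nonneg _) (hD (X ω)))
    have intφ₂T : Integrable (fun ω => φ₂ (T ω)) P := by
      have : Integrable (fun ω => h (X ω) * (S w ω - pt w (X ω))) P :=
        ((hSint w).sub (integrable_of_bdd hptwm.aestronglyMeasurable (C := 1) hptwb)).bdd_mul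
          hhXm.aestronglyMeasurable
          (Filter.Eventually.of_forall fun ω => by
            simpa only [Real.norm_eq_abs] using hD (X ω))
      exact this.congr (Filter.Eventually.of_forall fun ω => (hφ₂T ω).symm)
    have int1 : Integrable
        (fun ω => (piZ P Z w)⁻¹ * (indic Z w ω * φ₂ (T ω))) P :=
      (intφ₂T.bdd_mul (hindicm w).aestronglyMeasurable
        (Filter.Eventually.of_forall fun ω => by
          simpa only [Real.norm_eq_abs] using hindicb w ω)).const_mul _
    constructor
    · calc ∫ ω, h (X ω) * psiSW P X Z S J pt w ω ∂P
          = ∫ ω, ((piZ P Z w)⁻¹ * (indic Z w ω * φ₂ (T ω))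
              + h (X ω) * pt w (X ω)) ∂P :=
            integral_congr_ae (Filter.Eventually.of_forall hpt_eq)
        _ = (∫ ω, (piZ P Z w)⁻¹ * (indic Z w ω * φ₂ (T ω)) ∂P)
            + ∫ ω, h (X ω) * pt w (X ω) ∂P := integral_add int1 int2
        _ = (piZ P Z w)⁻¹ * (piZ P Z w * ∫ ω, φ₂ (T ω) ∂P)
            + ∫ ω, h (X ω) * pt w (X ω) ∂P := by
            rw [integral_const_mul, indep_integral_mul hT hZ hindT w φ₂ hφ₂m]
        _ = (∫ ω, φ₂ (T ω) ∂P) + ∫ ω, h (X ω) * pt w (X ω) ∂P := by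
            rw [← mul_assoc, inv_mul_cancel₀ (ne_of_gt hπ), one_mul]
        _ = ((∫ ω, h (X ω) * S w ω ∂P) - ∫ ω, h (X ω) * pt w (X ω) ∂P)
            + ∫ ω, h (X ω) * pt w (X ω) ∂P := by
            congr 1
            have hsplit : ∀ ω, φ₂ (T ω) = h (X ω) * S w ω - h (X ω) * pt w (X ω) := by
              intro ω
              rw [hφ₂T]
              ring
            rw [integral_congr_ae (Filter.Eventually.of_forall hsplit)]
            refine integral_sub ?_ int2
            exact ((hSint w).bdd_mul hhXm.aestronglyMeasurable
              (Filter.Eventually.of_forall fun ω => by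
                simpa only [Real.norm_eq_abs] using hD (X ω)))
        _ = ∫ ω, h (X ω) * S w ω ∂P := by ring
    · exact (int1.add int2).congr (Filter.Eventually.of_forall fun ω => (hpt_eq ω).symm)
  -- the augmented-survival difference identifies the stratum indicator
  have hpsi2 : ∀ (h : 𝒳 → ℝ), Measurable h → ∀ D : ℝ, (∀ x, |h x| ≤ D) →
      (∫ ω, h (X ω) * (psiSW P X Z S J pt (J - g + 1) ω - psiSW P X Z S J pt (J - g) ω) ∂P
        = ∫ ω, h (X ω) * indG J S g ω ∂P) ∧
      Integrable (fun ω => h (X ω)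
        * (psiSW P X Z S J pt (J - g + 1) ω - psiSW P X Z S J pt (J - g) ω)) P := by
    intro h hhm D hD
    have hhXm : Measurable (fun ω => h (X ω)) := hhm.comp hX
    obtain ⟨heq1, hint1⟩ := hpsi_main (J - g + 1) hmemB (by omega) (by omega) h hhm D hD
    have h2 : (∫ ω, h (X ω) * psiSW P X Z S J pt (J - g) ω ∂P
        = ∫ ω, h (X ω) * (if J - g = 0 then 0 else S (J - g) ω) ∂P)
        ∧ Integrable (fun ω => h (X ω) * psiSW P X Z S J pt (J - g) ω) P := by
      by_cases h0 : J - g = 0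
      · have hψ0 : psiSW P X Z S J pt (J - g) = fun _ => (0:ℝ) := by
          rw [psiSW, if_pos h0]
        rw [hψ0]
        simp only [h0, if_true, mul_zero]
        exact ⟨by simp, by simpa using (integrable_const (0:ℝ))⟩
      · obtain ⟨ha, hb⟩ := hpsi_main (J - g) hmemA (by omega) (by omega) h hhm D hD
        simp only [h0, if_false]
        exact ⟨ha, hb⟩
    have inthS1 : Integrable (fun ω => h (X ω) * S (J - g + 1) ω) P :=
      (hSint _).bdd_mul hhXm.aestronglyMeasurable
        (Filter.Eventually.of_forall fun ω => by
          simpa only [Real.norm_eq_abs] using hD (X ω))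
    have inthS2 : Integrable (fun ω => h (X ω) * (if J - g = 0 then 0 else S (J - g) ω)) P := by
      by_cases h0 : J - g = 0
      · simp only [h0, if_true, mul_zero]
        simpa using (integrable_const (0:ℝ))
      · simp only [h0, if_false]
        exact (hSint _).bdd_mul hhXm.aestronglyMeasurable
          (Filter.Eventually.of_forall fun ω => by
            simpa only [Real.norm_eq_abs] using hD (X ω))
    constructor
    · calc ∫ ω, h (X ω) * (psiSW P X Z S J pt (J - g + 1) ω - psiSW P X Z S J pt (J - g) ω) ∂P
          = ∫ ω, (h (X ω) * psiSW P X Z S J pt (J - g + 1) ω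
              - h (X ω) * psiSW P X Z S J pt (J - g) ω) ∂P :=
            integral_congr_ae (Filter.Eventually.of_forall fun ω => by ring)
        _ = (∫ ω, h (X ω) * psiSW P X Z S J pt (J - g + 1) ω ∂P)
            - ∫ ω, h (X ω) * psiSW P X Z S J pt (J - g) ω ∂P := integral_sub hint1 h2.2
        _ = (∫ ω, h (X ω) * S (J - g + 1) ω ∂P)
            - ∫ ω, h (X ω) * (if J - g = 0 then 0 else S (J - g) ω) ∂P := by
            rw [heq1, h2.1]
        _ = ∫ ω, (h (X ω) * S (J - g + 1) ω
            - h (X ω) * (if J - g = 0 then 0 else S (J - g) ω)) ∂P :=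
            (integral_sub inthS1 inthS2).symm
        _ = ∫ ω, h (X ω) * indG J S g ω ∂P := by
            refine integral_congr_ae ?_
            filter_upwards [E1 g g1 gJ] with ω hω
            rw [hω]
            ring
    · exact (hint1.sub h2.2).congr (Filter.Eventually.of_forall fun ω => by simp only [Pi.sub_apply]; ring)
  -- Goal 2
  have hgoal2 : ∫ ω, (psiSW P X Z S J pt (J - g + 1) ω - psiSW P X Z S J pt (J - g) ω) ∂P
      = (P {ω | Gsum J S ω = (g : ℝ)}).toReal := by
    have h := (hpsi2 (fun _ => 1) measurable_const 1 (fun x => by norm_num)).1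
    calc ∫ ω, (psiSW P X Z S J pt (J - g + 1) ω - psiSW P X Z S J pt (J - g) ω) ∂P
        = ∫ ω, (1:ℝ) * (psiSW P X Z S J pt (J - g + 1) ω - psiSW P X Z S J pt (J - g) ω) ∂P :=
          integral_congr_ae (Filter.Eventually.of_forall fun ω => (one_mul _).symm)
      _ = ∫ ω, (1:ℝ) * indG J S g ω ∂P := h
      _ = ∫ ω, indG J S g ω ∂P :=
          integral_congr_ae (Filter.Eventually.of_forall fun ω => one_mul _)
      _ = (P {ω | Gsum J S ω = (g : ℝ)}).toReal := by
          simp only [indG]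
          rw [integral_indicator_const _ (hGset g)]
          simp [measureReal_def]
  -- Goal 1
  have intQ2 := (hpsi2 mt hmtm C hC).2
  have hQ2val : ∫ ω, mt (X ω)
      * (psiSW P X Z S J pt (J - g + 1) ω - psiSW P X Z S J pt (J - g) ω) ∂P
      = ∫ ω, mt (X ω) * eg P X J S g ω ∂P := by
    rw [(hpsi2 mt hmtm C hC).1]
    exact pullout hX (sm_comp X hmtm) (fun ω => hC (X ω)) (hindGint g)
  have hI1 : ∫ ω, f𝒳 (X ω) * (Y z ω * S z ω) ∂P
      = ∫ ω, f𝒳 (X ω) * (mz ω * (P[S z | mX X]) ω) ∂P := by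
    rw [pullout hX (sm_comp X hfm) (fun ω => hfb (X ω)) hYSint]
    refine integral_congr_ae ?_
    filter_upwards [hW] with ω hω
    rw [← hWdef, hω]
  have hI2 : ∫ ω, (f𝒳 (X ω) * mt (X ω)) * S z ω ∂P
      = ∫ ω, (f𝒳 (X ω) * mt (X ω)) * (P[S z | mX X]) ω ∂P := by
    have hb : ∀ ω, |f𝒳 (X ω) * mt (X ω)| ≤ (2 / cw) * C := fun ω => by
      rw [abs_mul]
      exact mul_le_mul (hfb (X ω)) (hC (X ω)) (abs_nonneg _) (by positivity)
    exact pullout hX (sm_comp X (hfm.mul hmtm)) hb (hSint z)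
  have intI1 : Integrable (fun ω => f𝒳 (X ω) * (Y z ω * S z ω)) P :=
    hYSint.bdd_mul (hfm.comp hX).aestronglyMeasurable
      (Filter.Eventually.of_forall fun ω => by
        simpa only [Real.norm_eq_abs] using hfb (X ω))
  have intI2 : Integrable (fun ω => (f𝒳 (X ω) * mt (X ω)) * S z ω) P :=
    (hSint z).bdd_mul ((hfm.comp hX).mul hmtXm).aestronglyMeasurable
      (Filter.Eventually.of_forall fun ω => by
        rw [Real.norm_eq_abs, abs_mul]
        exact mul_le_mul (hfb (X ω)) (hC (X ω)) (abs_nonneg _) (by positivity))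
  have hφ₁T_int : ∫ ω, φ₁ (T ω) ∂P
      = (∫ ω, f𝒳 (X ω) * (Y z ω * S z ω) ∂P)
        - ∫ ω, (f𝒳 (X ω) * mt (X ω)) * S z ω ∂P := by
    calc ∫ ω, φ₁ (T ω) ∂P
        = ∫ ω, (f𝒳 (X ω) * (Y z ω * S z ω) - (f𝒳 (X ω) * mt (X ω)) * S z ω) ∂P :=
          integral_congr_ae (Filter.Eventually.of_forall fun ω => by simp only [hφ₁T]; ring)
      _ = _ := integral_sub intI1 intI2
  have hgoal1 : ∫ ω,
      ((workP X pt (J - g + 1) ω - workP X pt (J - g) ω) / workP X pt z ω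
          * (indic Z z ω * Sobs J Z S ω * (Yobs J Z Y ω - mt (X ω)) / piZ P Z z)
        + mt (X ω) * (psiSW P X Z S J pt (J - g + 1) ω - psiSW P X Z S J pt (J - g) ω)) ∂P
      = ∫ ω, Y z ω * indG J S g ω ∂P := by
    have hdecomp : ∀ ω,
        (workP X pt (J - g + 1) ω - workP X pt (J - g) ω) / workP X pt z ω
            * (indic Z z ω * Sobs J Z S ω * (Yobs J Z Y ω - mt (X ω)) / piZ P Z z)
          + mt (X ω) * (psiSW P X Z S J pt (J - g + 1) ω - psiSW P X Z S J pt (J - g) ω)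
        = (piZ P Z z)⁻¹ * (indic Z z ω * φ₁ (T ω))
          + mt (X ω) * (psiSW P X Z S J pt (J - g + 1) ω - psiSW P X Z S J pt (J - g) ω) := by
      intro ω
      rw [hf𝒳ω ω, hobsSY ω, hφ₁T ω]
      ring
    have hsplit : ∫ ω,
        ((workP X pt (J - g + 1) ω - workP X pt (J - g) ω) / workP X pt z ω
            * (indic Z z ω * Sobs J Z S ω * (Yobs J Z Y ω - mt (X ω)) / piZ P Z z)
          + mt (X ω) * (psiSW P X Z S J pt (J - g + 1) ω - psiSW P X Z S J pt (J - g) ω)) ∂P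
        = (∫ ω, φ₁ (T ω) ∂P)
          + ∫ ω, mt (X ω)
            * (psiSW P X Z S J pt (J - g + 1) ω - psiSW P X Z S J pt (J - g) ω) ∂P := by
      rw [integral_congr_ae (Filter.Eventually.of_forall hdecomp), integral_add intQ1 intQ2]
      congr 1
      rw [integral_const_mul, indep_integral_mul hT hZ hindT z φ₁ hφ₁m,
        ← mul_assoc, inv_mul_cancel₀ (ne_of_gt hzpos), one_mul]
    rcases hdr with hwp | hmt
    · -- correct principal scores
      have hDeg : ∀ᵐ ω ∂P, pscore P X S J (J - g + 1) ω - pscore P X S J (J - g) ω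
          = eg P X J S g ω := by
        have hpt1 : pscore P X S J (J - g + 1) = P[S (J - g + 1) | mX X] := by
          rw [pscore, if_neg (by omega : ¬ J - g + 1 = 0), if_neg (by omega : ¬ J - g + 1 = J + 1)]
        by_cases h0 : J - g = 0
        · have hpt2 : pscore P X S J (J - g) = fun _ => (0:ℝ) := by
            rw [pscore, if_pos h0]
          have he : eg P X J S g =ᵐ[P] P[S (J - g + 1) | mX X] := by
            refine condExp_congr_ae ?_
            refine (E1 g g1 gJ).trans (Filter.Eventually.of_forall fun ω => ?_)
            simp [h0]
          filter_upwards [he] with ω hω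
          rw [hpt1, hpt2, hω]
          simp
        · have hpt2 : pscore P X S J (J - g) = P[S (J - g) | mX X] := by
            rw [pscore, if_neg h0, if_neg (by omega : ¬ J - g = J + 1)]
          have hsub := condExp_sub (m := mX X) (μ := P) (hSint (J - g + 1)) (hSint (J - g))
          have he : eg P X J S g =ᵐ[P] P[S (J - g + 1) - S (J - g) | mX X] := by
            refine condExp_congr_ae ?_
            refine (E1 g g1 gJ).trans (Filter.Eventually.of_forall fun ω => ?_)
            simp [h0]
          filter_upwards [he, hsub] with ω h1 h2
          rw [hpt1, hpt2, h1, h2]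
          rfl
      have hfpz : ∀ᵐ ω ∂P, f𝒳 (X ω) * (P[S z | mX X]) ω = eg P X J S g ω := by
        filter_upwards [hwp _ hmemA, hwp _ hmemB, hwp _ hmemz, hpzpos, hDeg]
          with ω hA hB hz' hp hD
        have h1 : f𝒳 (X ω)
            = (pscore P X S J (J - g + 1) ω - pscore P X S J (J - g) ω)
              / (P[S z | mX X]) ω := by
          rw [← hf𝒳ω ω, hA, hB, hz', hqz]
        rw [h1, ← hD, div_mul_cancel₀ _ (ne_of_gt hp)]
      have hI1' : ∫ ω, f𝒳 (X ω) * (mz ω * (P[S z | mX X]) ω) ∂P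
          = ∫ ω, mz ω * eg P X J S g ω ∂P := by
        refine integral_congr_ae ?_
        filter_upwards [hfpz] with ω hω
        rw [← hω]
        ring
      have hI2' : ∫ ω, (f𝒳 (X ω) * mt (X ω)) * (P[S z | mX X]) ω ∂P
          = ∫ ω, mt (X ω) * eg P X J S g ω ∂P := by
        refine integral_congr_ae ?_
        filter_upwards [hfpz] with ω hω
        rw [← hω]
        ring
      rw [hsplit, hφ₁T_int, hI1, hI2, hI1', hI2', hQ2val, hYG]
      ring
    · -- correct outcome regression
      have hzero : ∫ ω, φ₁ (T ω) ∂P = 0 := by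
        rw [hφ₁T_int, hI1, hI2]
        have : ∫ ω, f𝒳 (X ω) * (mz ω * (P[S z | mX X]) ω) ∂P
            = ∫ ω, (f𝒳 (X ω) * mt (X ω)) * (P[S z | mX X]) ω ∂P := by
          refine integral_congr_ae ?_
          filter_upwards [hmt] with ω hω
          rw [← hω]
          ring
        rw [this, sub_self]
      rw [hsplit, hzero, zero_add, hQ2val, hYG]
      refine integral_congr_ae ?_
      filter_upwards [hmt] with ω hω
      rw [← hω]
  exact ⟨hgoal1, hgoal2, fun _ => by rw [hgoal1, hgoal2]⟩

end TruncationByDeath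
end
end
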